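/- arXiv:1710.00788 — 12 statements merged into one kernel-verified Lean document; each statement's English description precedes it below -/
import Mathlib

section
/- Let R be a commutative ring, n a natural number, X an n×n matrix over R, and s, t ∈ R. For any ℓ with 0 ≤ ℓ ≤ n and any two subsets I, J of {1,…,n} each of cardinality ℓ, the permanent of the ℓ×ℓ submatrix of sI + tX with rows indexed by I and columns indexed by J equals the sum over j = 0,…,ℓ of s^{ℓ-j} t^j times the sum, over all subsets A of I ∩ J with |A| = ℓ - j, of the permanent of the submatrix of X with rows indexed by I \ A and columns indexed by J \ A. -/
/-- The permanent of a square matrix: `per(M) = Σ_{σ} Π_i M_{i, σ(i)}`. -/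
def permanent {α : Type*} [Fintype α] [DecidableEq α] {R : Type*} [CommSemiring R]
    (M : Matrix α α R) : R :=
  ∑ σ : Equiv.Perm α, ∏ i, M i (σ i)

/-- The permanent of the submatrix of `M` with rows indexed by `I` and columns indexed
by `J` (for `|I| = |J|`); expressed as a sum over bijections `I ≃ J`, which agrees with
the permanent of the submatrix with rows and columns taken in increasing order. -/
def permOn {n : ℕ} {R : Type*} [CommSemiring R] (M : Matrix (Fin n) (Fin n) R)
    (I J : Finset (Fin n)) : R :=
  ∑ e : {i // i ∈ I} ≃ {j // j ∈ J}, ∏ i : {i // i ∈ I}, M i.1 (e i).1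

open Finset

section Aux
variable {n : ℕ} {R : Type*} [CommRing R]

lemma eAux {I J A : Finset (Fin n)} (hAI : A ⊆ I)
    (e : {i : Fin n // i ∈ I} ≃ {j : Fin n // j ∈ J})
    (he : ∀ i : {i : Fin n // i ∈ I}, i.1 ∈ A → ((e i : {j // j ∈ J}) : Fin n) = i.1)
    (i : {i : Fin n // i ∈ I}) (hi : i.1 ∉ A) : ((e i : {j // j ∈ J}) : Fin n) ∉ A := by
  intro h
  apply hi
  have : e ⟨(e i).1, hAI h⟩ = e i := Subtype.ext (he ⟨(e i).1, hAI h⟩ h)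
  have := e.injective this
  rw [← this]; exact h

lemma eSymmFix {I J A : Finset (Fin n)} (hAI : A ⊆ I) (hAJ : A ⊆ J)
    (e : {i : Fin n // i ∈ I} ≃ {j : Fin n // j ∈ J})
    (he : ∀ i : {i : Fin n // i ∈ I}, i.1 ∈ A → ((e i : {j // j ∈ J}) : Fin n) = i.1)
    (a : Fin n) (ha : a ∈ A) : ((e.symm ⟨a, hAJ ha⟩ : {i // i ∈ I}) : Fin n) = a := by
  have : e ⟨a, hAI ha⟩ = ⟨a, hAJ ha⟩ := Subtype.ext (he ⟨a, hAI ha⟩ ha)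
  rw [← this, Equiv.symm_apply_apply]

def fixEquiv (I J A : Finset (Fin n)) (hAI : A ⊆ I) (hAJ : A ⊆ J) :
    {e : {i : Fin n // i ∈ I} ≃ {j : Fin n // j ∈ J} //
      ∀ i : {i : Fin n // i ∈ I}, i.1 ∈ A → ((e i : {j // j ∈ J}) : Fin n) = i.1} ≃
    ({i : Fin n // i ∈ I \ A} ≃ {j : Fin n // j ∈ J \ A}) where
  toFun := fun ⟨e, he⟩ =>
    { toFun := fun i => ⟨(e ⟨i.1, (mem_sdiff.1 i.2).1⟩ : {j // j ∈ J}),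
        mem_sdiff.2 ⟨(e _).2, eAux hAI e he _ (mem_sdiff.1 i.2).2⟩⟩
      invFun := fun j => ⟨(e.symm ⟨j.1, (mem_sdiff.1 j.2).1⟩ : {i // i ∈ I}),
        mem_sdiff.2 ⟨(e.symm _).2, by
          intro h
          have h1 := eSymmFix hAI hAJ e he _ h
          have h2 : e.symm ⟨((e.symm ⟨j.1, (mem_sdiff.1 j.2).1⟩ : {i // i ∈ I}) : Fin n), hAJ h⟩
              = e.symm ⟨j.1, (mem_sdiff.1 j.2).1⟩ := Subtype.ext h1
          have h3 := e.symm.injective h2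
          have h4 : ((e.symm ⟨j.1, (mem_sdiff.1 j.2).1⟩ : {i // i ∈ I}) : Fin n) = j.1 :=
            congrArg Subtype.val h3
          exact (mem_sdiff.1 j.2).2 (h4 ▸ h)⟩⟩
      left_inv := fun i => by apply Subtype.ext; simp
      right_inv := fun j => by apply Subtype.ext; simp }
  invFun := fun f =>
    ⟨{ toFun := fun i => if h : i.1 ∈ A then ⟨i.1, hAJ h⟩ else
         ⟨(f ⟨i.1, mem_sdiff.2 ⟨i.2, h⟩⟩ : {j // j ∈ J \ A}), (mem_sdiff.1 (f _).2).1⟩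
       invFun := fun j => if h : j.1 ∈ A then ⟨j.1, hAI h⟩ else
         ⟨(f.symm ⟨j.1, mem_sdiff.2 ⟨j.2, h⟩⟩ : {i // i ∈ I \ A}), (mem_sdiff.1 (f.symm _).2).1⟩
       left_inv := fun i => by
         by_cases h : i.1 ∈ A
         · simp [h]
         · simp only [h, dif_neg, not_false_iff]
           have hm := (mem_sdiff.1 (f ⟨i.1, mem_sdiff.2 ⟨i.2, h⟩⟩).2).2
           rw [dif_neg hm]
           apply Subtype.ext; simp
       right_inv := fun j => by
         by_cases h : j.1 ∈ A
         · simp [h]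
         · simp only [h, dif_neg, not_false_iff]
           have hm := (mem_sdiff.1 (f.symm ⟨j.1, mem_sdiff.2 ⟨j.2, h⟩⟩).2).2
           rw [dif_neg hm]
           apply Subtype.ext; simp },
     fun i hi => by simp [hi]⟩
  left_inv := fun ⟨e, he⟩ => by
    apply Subtype.ext
    apply Equiv.ext
    intro i
    by_cases h : i.1 ∈ A
    · simp only [Equiv.coe_fn_mk, dif_pos h]
      exact (Subtype.ext (he i h)).symm
    · simp [h]
  right_inv := fun f => by
    apply Equiv.ext
    intro i
    have h := (mem_sdiff.1 i.2).2
    apply Subtype.ext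
    simp [h]

lemma sum_fix (X : Matrix (Fin n) (Fin n) R) (I J A : Finset (Fin n))
    (hAI : A ⊆ I) (hAJ : A ⊆ J) :
    ∑ e ∈ univ.filter (fun e : {i : Fin n // i ∈ I} ≃ {j : Fin n // j ∈ J} =>
        ∀ i : {i : Fin n // i ∈ I}, i.1 ∈ A → ((e i : {j // j ∈ J}) : Fin n) = i.1),
      ∏ i ∈ univ.filter (fun i : {i : Fin n // i ∈ I} => i.1 ∉ A), X i.1 (e i).1
    = permOn X (I \ A) (J \ A) := by
  rw [permOn]
  rw [Finset.sum_subtype (p := fun e : {i : Fin n // i ∈ I} ≃ {j : Fin n // j ∈ J} =>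
        ∀ i : {i : Fin n // i ∈ I}, i.1 ∈ A → ((e i : {j // j ∈ J}) : Fin n) = i.1)
      _ (by simp)]
  apply Fintype.sum_equiv (fixEquiv I J A hAI hAJ)
  intro e
  refine Finset.prod_bij' (fun (a : {i : Fin n // i ∈ I}) (ha : a ∈ univ.filter (fun i => i.1 ∉ A)) =>
      (⟨a.1, mem_sdiff.2 ⟨a.2, by simpa using ha⟩⟩ : {i : Fin n // i ∈ I \ A}))
    (fun (b : {i : Fin n // i ∈ I \ A}) _ => ⟨b.1, (mem_sdiff.1 b.2).1⟩) ?_ ?_ ?_ ?_ ?_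
  · intro a ha; exact mem_univ _
  · intro b hb; simp [(mem_sdiff.1 b.2).2]
  · intro a ha; rfl
  · intro b hb; rfl
  · intro a ha
    obtain ⟨e, he⟩ := e
    rfl

lemma memImage (I : Finset (Fin n)) (B : Finset {i : Fin n // i ∈ I}) (i : {i : Fin n // i ∈ I}) :
    i.1 ∈ B.image Subtype.val ↔ i ∈ B :=
  Subtype.val_injective.mem_finset_image

open scoped Classical in
lemma prodBoole (I : Finset (Fin n)) (s : R) (B : Finset {i : Fin n // i ∈ I})
    (p : {i : Fin n // i ∈ I} → Prop) [DecidablePred p] :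
    ∏ i ∈ B, (s * if p i then 1 else 0) = s ^ B.card * if ∀ i ∈ B, p i then 1 else 0 := by
  rw [Finset.prod_mul_distrib, Finset.prod_const, Finset.prod_boole]
  simp

open scoped Classical in
lemma permOn_expand (X : Matrix (Fin n) (Fin n) R) (s t : R) (I J : Finset (Fin n)) :
    permOn (s • (1 : Matrix (Fin n) (Fin n) R) + t • X) I J =
      ∑ A ∈ (I ∩ J).powerset, s ^ A.card * t ^ (I.card - A.card) * permOn X (I \ A) (J \ A) := by
  classical
  -- G A : the generic term
  set G : Finset (Fin n) → R := fun A =>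
    s ^ A.card * t ^ (I.card - A.card) *
      ∑ e ∈ univ.filter (fun e : {i : Fin n // i ∈ I} ≃ {j : Fin n // j ∈ J} =>
          ∀ i : {i : Fin n // i ∈ I}, i.1 ∈ A → ((e i : {j // j ∈ J}) : Fin n) = i.1),
        ∏ i ∈ univ.filter (fun i : {i : Fin n // i ∈ I} => i.1 ∉ A), X i.1 (e i).1
    with hG
  have step1 : permOn (s • (1 : Matrix (Fin n) (Fin n) R) + t • X) I J =
      ∑ B ∈ (univ : Finset {i : Fin n // i ∈ I}).powerset,
        ∑ e : {i : Fin n // i ∈ I} ≃ {j : Fin n // j ∈ J},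
          (∏ i ∈ B, (s * if i.1 = ((e i : {j // j ∈ J}) : Fin n) then 1 else 0)) *
          ∏ i ∈ univ \ B, t * X i.1 (e i).1 := by
    rw [permOn]
    have h1 : ∀ e : {i : Fin n // i ∈ I} ≃ {j : Fin n // j ∈ J},
        ∏ i : {i : Fin n // i ∈ I}, (s • (1 : Matrix (Fin n) (Fin n) R) + t • X) i.1 (e i).1 =
        ∑ B ∈ (univ : Finset {i : Fin n // i ∈ I}).powerset,
          (∏ i ∈ B, (s * if i.1 = ((e i : {j // j ∈ J}) : Fin n) then 1 else 0)) *
          ∏ i ∈ univ \ B, t * X i.1 (e i).1 := by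
      intro e
      rw [← Finset.prod_add]
      refine Finset.prod_congr rfl fun i _ => ?_
      simp [Matrix.add_apply, Matrix.smul_apply, Matrix.one_apply, smul_eq_mul]
    rw [Finset.sum_congr rfl fun e _ => h1 e, Finset.sum_comm]
  have step2 : ∀ B : Finset {i : Fin n // i ∈ I},
      ∑ e : {i : Fin n // i ∈ I} ≃ {j : Fin n // j ∈ J},
        (∏ i ∈ B, (s * if i.1 = ((e i : {j // j ∈ J}) : Fin n) then 1 else 0)) *
          ∏ i ∈ univ \ B, t * X i.1 (e i).1
      = G (B.image Subtype.val) := by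
    intro B
    have hsetB : univ.filter (fun i : {i : Fin n // i ∈ I} => i.1 ∉ B.image Subtype.val)
        = univ \ B := by
      ext i; simp [memImage]
    have hcard : (B.image Subtype.val).card = B.card :=
      Finset.card_image_of_injective _ Subtype.val_injective
    have hcard2 : (univ \ B).card = I.card - B.card := by
      rw [Finset.card_sdiff_of_subset (subset_univ B), Finset.card_univ, Fintype.card_coe]
    have h2 : ∀ e : {i : Fin n // i ∈ I} ≃ {j : Fin n // j ∈ J},
        (∏ i ∈ B, (s * if i.1 = ((e i : {j // j ∈ J}) : Fin n) then 1 else 0)) *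
          ∏ i ∈ univ \ B, t * X i.1 (e i).1
        = s ^ B.card * t ^ (I.card - B.card) *
          if (∀ i : {i : Fin n // i ∈ I}, i.1 ∈ B.image Subtype.val →
              ((e i : {j // j ∈ J}) : Fin n) = i.1) then
            ∏ i ∈ univ \ B, X i.1 (e i).1 else 0 := by
      intro e
      rw [prodBoole, Finset.prod_mul_distrib, Finset.prod_const, hcard2]
      have hiff : (∀ i ∈ B, i.1 = ((e i : {j // j ∈ J}) : Fin n)) ↔
          (∀ i : {i : Fin n // i ∈ I}, i.1 ∈ B.image Subtype.val →
            ((e i : {j // j ∈ J}) : Fin n) = i.1) := by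
        constructor
        · intro h i hi; exact (h i ((memImage I B i).1 hi)).symm
        · intro h i hi; exact (h i ((memImage I B i).2 hi)).symm
      rw [if_congr hiff rfl rfl]
      split_ifs <;> ring
    rw [Finset.sum_congr rfl fun e _ => h2 e, ← Finset.mul_sum, hG]
    simp only [hcard, hsetB]
    congr 1
    rw [Finset.sum_filter]
  rw [step1, Finset.sum_congr rfl fun B _ => step2 B]
  -- reindex over subsets of I
  have step3 : ∑ B ∈ (univ : Finset {i : Fin n // i ∈ I}).powerset, G (B.image Subtype.val)
      = ∑ A ∈ I.powerset, G A := by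
    refine Finset.sum_nbij' (fun B => B.image Subtype.val) (fun A => A.subtype (· ∈ I))
      ?_ ?_ ?_ ?_ ?_
    · intro B _
      rw [Finset.mem_powerset]
      intro a ha
      obtain ⟨b, _, rfl⟩ := Finset.mem_image.1 ha
      exact b.2
    · intro A _; exact Finset.mem_powerset.2 (subset_univ _)
    · intro B _
      ext i
      simp [Finset.mem_subtype, memImage]
    · intro A hA
      have hAI := Finset.mem_powerset.1 hA
      ext a
      simp only [Finset.mem_image, Finset.mem_subtype]
      constructor
      · rintro ⟨b, hb, rfl⟩; exact hb
      · intro ha; exact ⟨⟨a, hAI ha⟩, ha, rfl⟩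
    · intro B _; rfl
  rw [step3]
  -- kill the terms with A ⊄ J
  rw [← Finset.sum_subset (Finset.powerset_mono.2 Finset.inter_subset_left) ?_]
  · refine Finset.sum_congr rfl fun A hA => ?_
    have hAIJ := Finset.mem_powerset.1 hA
    rw [hG]
    dsimp only
    rw [sum_fix X I J A (hAIJ.trans Finset.inter_subset_left)
      (hAIJ.trans Finset.inter_subset_right)]
  · intro A hA hA2
    have hAI := Finset.mem_powerset.1 hA
    obtain ⟨a, haA, haJ⟩ : ∃ a ∈ A, a ∉ J := by
      by_contra h
      push_neg at h
      exact hA2 (Finset.mem_powerset.2 (fun x hx => Finset.mem_inter.2 ⟨hAI hx, h x hx⟩))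
    have hempty : univ.filter (fun e : {i : Fin n // i ∈ I} ≃ {j : Fin n // j ∈ J} =>
        ∀ i : {i : Fin n // i ∈ I}, i.1 ∈ A → ((e i : {j // j ∈ J}) : Fin n) = i.1) = ∅ := by
      rw [Finset.filter_eq_empty_iff]
      intro e _
      intro h
      have hmem := (e ⟨a, hAI haA⟩).2
      rw [h ⟨a, hAI haA⟩ haA] at hmem
      exact haJ hmem
    rw [hG]
    dsimp only
    rw [hempty, Finset.sum_empty, mul_zero]

end Aux

theorem stmt0 {R : Type*} [CommRing R] (n : ℕ) (X : Matrix (Fin n) (Fin n) R)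
    (s t : R) (ℓ : ℕ) (hℓ : ℓ ≤ n) (I J : Finset (Fin n))
    (hI : I.card = ℓ) (hJ : J.card = ℓ) :
    permOn (s • (1 : Matrix (Fin n) (Fin n) R) + t • X) I J =
      ∑ j ∈ Finset.range (ℓ + 1), s ^ (ℓ - j) * t ^ j *
        ∑ A ∈ (I ∩ J).powersetCard (ℓ - j), permOn X (I \ A) (J \ A) := by
  rw [permOn_expand, hI]
  rw [Finset.powerset_card_disjiUnion]; erw [Finset.sum_disjiUnion]
  have hcard : (I ∩ J).card ≤ ℓ := hI ▸ Finset.card_le_card Finset.inter_subset_left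
  rw [Finset.sum_subset (Finset.range_subset_range.2 (Nat.succ_le_succ hcard))
    (fun k _ hk => by
      rw [Finset.mem_range, not_lt] at hk
      rw [Finset.powersetCard_eq_empty.2 (by omega), Finset.sum_empty])]
  rw [← Finset.sum_range_reflect]
  refine Finset.sum_congr rfl fun j hj => ?_
  have hjℓ : j ≤ ℓ := Nat.lt_succ_iff.1 (Finset.mem_range.1 hj)
  have h1 : ℓ + 1 - 1 - j = ℓ - j := by omega
  rw [h1, Finset.mul_sum]
  refine Finset.sum_congr rfl fun A hA => ?_
  have hAc : A.card = ℓ - j := (Finset.mem_powersetCard.1 hA).2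
  rw [hAc, Nat.sub_sub_self hjℓ]
end

section
/- Let R be a commutative ring, n a natural number, X an n×n matrix over R, and s, t ∈ R. Then per(sI + tX) = Σ_{j=0}^{n} s^{n-j} t^j · Σ_{A ⊆ {1,…,n}, |A| = j} per(X_{AA}), where X_{AA} is the principal submatrix of X with rows and columns indexed by A. (Equivalently, per(sI + tX) = Σ_j s^{n-j} t^j tr X^{∨j}, where tr X^{∨j} is the sum of the permanents of all j×j principal submatrices of X.) -/
lemma perm_fix_sum {n : ℕ} {R : Type*} [CommRing R] (X : Matrix (Fin n) (Fin n) R)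
    (A : Finset (Fin n)) :
    ∑ σ ∈ Finset.univ.filter (fun σ : Equiv.Perm (Fin n) => ∀ i ∉ A, σ i = i),
      ∏ i ∈ A, X i (σ i) = permOn X A A := by
  rw [permOn]
  have hmem : ∀ σ ∈ Finset.univ.filter (fun σ : Equiv.Perm (Fin n) => ∀ i ∉ A, σ i = i),
      ∀ x : Fin n, x ∈ A ↔ σ x ∈ A := by
    intro σ hσ x
    rw [Finset.mem_filter] at hσ
    constructor
    · intro hx
      by_contra h'
      have h1 := hσ.2 (σ x) h'
      have := σ.injective h1
      rw [this] at h'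
      exact h' hx
    · intro hx
      by_contra h'
      rw [hσ.2 x h'] at hx
      exact h' hx
  refine Finset.sum_bij' (fun σ hσ => Equiv.Perm.subtypePerm σ (fun x => (hmem σ hσ x).symm))
    (fun e _ => Equiv.Perm.ofSubtype e) ?_ ?_ ?_ ?_ ?_
  · intro σ hσ; exact Finset.mem_univ _
  · intro e _
    rw [Finset.mem_filter]
    exact ⟨Finset.mem_univ _, fun i hi => Equiv.Perm.ofSubtype_apply_of_not_mem e hi⟩
  · intro σ hσ
    ext x
    by_cases hx : x ∈ A
    · rw [Equiv.Perm.ofSubtype_apply_of_mem _ hx]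
      rfl
    · rw [Equiv.Perm.ofSubtype_apply_of_not_mem _ hx]
      exact congrArg Fin.val ((Finset.mem_filter.mp hσ).2 x hx).symm
  · intro e _
    ext x
    simp [Equiv.Perm.subtypePerm_apply, Equiv.Perm.ofSubtype_apply_of_mem e x.2]
  · intro σ hσ
    rw [Finset.univ_eq_attach, ← Finset.prod_attach A (fun i => X i (σ i))]
    rfl

/-- `per(sI + tX) = Σ_{j=0}^{n} s^{n-j} t^j · Σ_{|A| = j} per(X_{AA})`, i.e. the trace
formula `per(sI + tX) = Σ_j s^{n-j} t^j tr X^{∨j}`. -/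
theorem stmt1 {R : Type*} [CommRing R] (n : ℕ) (X : Matrix (Fin n) (Fin n) R)
    (s t : R) :
    permanent (s • (1 : Matrix (Fin n) (Fin n) R) + t • X) =
      ∑ j ∈ Finset.range (n + 1), s ^ (n - j) * t ^ j *
        ∑ A ∈ Finset.powersetCard j (Finset.univ : Finset (Fin n)), permOn X A A := by
  have hLHS : permanent (s • (1 : Matrix (Fin n) (Fin n) R) + t • X) =
      ∑ A ∈ (Finset.univ : Finset (Fin n)).powerset,
        s ^ (n - A.card) * t ^ A.card * permOn X A A := by
    unfold permanent
    have hcell : ∀ (σ : Equiv.Perm (Fin n)) (i : Fin n),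
        (s • (1 : Matrix (Fin n) (Fin n) R) + t • X) i (σ i)
          = t * X i (σ i) + s * (if i = σ i then 1 else 0) := by
      intro σ i
      simp [Matrix.add_apply, Matrix.one_apply, add_comm]
    simp only [hcell, Finset.prod_add]
    rw [Finset.sum_comm]
    refine Finset.sum_congr rfl ?_
    intro A hA
    have hAcard : (Finset.univ \ A).card = n - A.card := by
      rw [Finset.card_sdiff_of_subset (Finset.subset_univ A), Finset.card_univ, Fintype.card_fin]
    calc ∑ σ : Equiv.Perm (Fin n),
          (∏ i ∈ A, t * X i (σ i)) * ∏ i ∈ Finset.univ \ A, s * (if i = σ i then 1 else 0)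
        = ∑ σ : Equiv.Perm (Fin n),
            (s ^ (n - A.card) * t ^ A.card * ∏ i ∈ A, X i (σ i)) *
              (if ∀ i ∈ Finset.univ \ A, i = σ i then 1 else 0) := by
          refine Finset.sum_congr rfl fun σ _ => ?_
          rw [Finset.prod_mul_distrib, Finset.prod_mul_distrib, Finset.prod_const,
            Finset.prod_const, Finset.prod_boole, hAcard]
          ring
      _ = ∑ σ ∈ Finset.univ.filter
            (fun σ : Equiv.Perm (Fin n) => ∀ i ∉ A, σ i = i),
            s ^ (n - A.card) * t ^ A.card * ∏ i ∈ A, X i (σ i) := by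
          rw [Finset.sum_filter]
          refine Finset.sum_congr rfl fun σ _ => ?_
          have : (∀ i ∈ Finset.univ \ A, i = σ i) ↔ (∀ i ∉ A, σ i = i) := by
            constructor
            · intro h i hi; exact (h i (Finset.mem_sdiff.mpr ⟨Finset.mem_univ _, hi⟩)).symm
            · intro h i hi; exact (h i (Finset.mem_sdiff.mp hi).2).symm
          simp only [mul_ite, mul_one, mul_zero]
          exact if_congr this rfl rfl
      _ = s ^ (n - A.card) * t ^ A.card * permOn X A A := by
          rw [← Finset.mul_sum, perm_fix_sum]
  rw [hLHS, Finset.sum_powerset]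
  rw [Finset.card_univ, Fintype.card_fin]
  refine Finset.sum_congr rfl fun j _ => ?_
  rw [Finset.mul_sum]
  refine Finset.sum_congr rfl fun A hA => ?_
  rw [(Finset.mem_powersetCard.mp hA).2]
end

section
/- Let σ be a permutation of {1,…,n}, let P_σ be its n×n permutation matrix (with (P_σ)_{ij} = 1 if σ(i) = j and 0 otherwise), and let t be an element of a commutative ring. Then per(I + t·P_σ) = Π_{ℓ=1}^{n} (1 + t^ℓ)^{n_σ(ℓ)}, where n_σ(ℓ) is the number of cycles of length ℓ in the cycle decomposition of σ (fixed points counting as cycles of length 1). -/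
/-- The permutation matrix of `σ`: `(P_σ)_{ij} = 1` if `σ(i) = j`, else `0`. -/
def permMatrix {n : ℕ} (R : Type*) [CommRing R] (σ : Equiv.Perm (Fin n)) :
    Matrix (Fin n) (Fin n) R :=
  Matrix.of fun i j => if σ i = j then 1 else 0

section Aux

variable {n : ℕ}

lemma pow_mem_aux {σ : Equiv.Perm (Fin n)} {S : Finset (Fin n)}
    (h : ∀ i ∈ S, σ i ∈ S) : ∀ (k : ℕ), ∀ i ∈ S, (σ ^ k) i ∈ S := by
  intro k
  induction k with
  | zero => simp
  | succ m ih =>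
      intro i hi
      rw [pow_succ', Equiv.Perm.mul_apply]
      exact h _ (ih i hi)

lemma inv_mem_aux {σ : Equiv.Perm (Fin n)} {S : Finset (Fin n)}
    (h : ∀ i ∈ S, σ i ∈ S) : ∀ i ∈ S, σ⁻¹ i ∈ S := by
  have himg : S.image σ = S := by
    apply Finset.eq_of_subset_of_card_le
    · intro j hj
      obtain ⟨i, hi, rfl⟩ := Finset.mem_image.mp hj
      exact h i hi
    · rw [Finset.card_image_of_injective _ σ.injective]
  intro i hi
  rw [← himg] at hi
  obtain ⟨j, hj, hji⟩ := Finset.mem_image.mp hi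
  rwa [← hji, ← Equiv.Perm.mul_apply, inv_mul_cancel, Equiv.Perm.one_apply]

lemma zpow_mem_aux {σ : Equiv.Perm (Fin n)} {S : Finset (Fin n)}
    (h : ∀ i ∈ S, σ i ∈ S) : ∀ (k : ℤ), ∀ i ∈ S, (σ ^ k) i ∈ S := by
  intro k i hi
  cases k with
  | ofNat m => exact pow_mem_aux h m i hi
  | negSucc m =>
      rw [zpow_negSucc, ← inv_pow]
      exact pow_mem_aux (inv_mem_aux h) (m + 1) i hi

/-- If `S` is `σ`-invariant and meets the support of a cycle factor `c` of `σ`,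
then `S` contains the whole support of `c`. -/
lemma support_subset_aux {σ c : Equiv.Perm (Fin n)} (hc : c ∈ σ.cycleFactorsFinset)
    {S : Finset (Fin n)} (hS : ∀ i ∈ S, σ i ∈ S) {i : Fin n} (hi : i ∈ S)
    (hic : i ∈ c.support) : c.support ⊆ S := by
  obtain ⟨hcyc, hagree⟩ := Equiv.Perm.mem_cycleFactorsFinset_iff.mp hc
  have hSc : ∀ j ∈ S, c j ∈ S := by
    intro j hj
    by_cases hjc : j ∈ c.support
    · rw [hagree j hjc]; exact hS j hj
    · rw [Equiv.Perm.notMem_support.mp hjc]; exact hj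
  intro j hj
  obtain ⟨k, hk⟩ := hcyc.sameCycle (Equiv.Perm.mem_support.mp hic)
    (Equiv.Perm.mem_support.mp hj)
  rw [← hk]
  exact zpow_mem_aux hSc k i hi

/-- Expansion of the permanent as a sum over `σ`-invariant subsets. -/
lemma permanent_eq_sum_invariant {R : Type*} [CommRing R] (σ : Equiv.Perm (Fin n)) (t : R) :
    permanent ((1 : Matrix (Fin n) (Fin n) R) + t • permMatrix R σ) =
      ∑ S : Finset (Fin n), if ∀ i ∈ S, σ i ∈ S then t ^ S.card else 0 := by
  unfold permanent
  have entry : ∀ (τ : Equiv.Perm (Fin n)) (i : Fin n),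
      ((1 : Matrix (Fin n) (Fin n) R) + t • permMatrix R σ) i (τ i)
        = (t * if σ i = τ i then 1 else 0) + (if i = τ i then 1 else 0) := by
    intro τ i
    simp only [Matrix.add_apply, Matrix.smul_apply, Matrix.one_apply, permMatrix,
      Matrix.of_apply, smul_eq_mul]
    ring
  have step1 : ∀ τ : Equiv.Perm (Fin n),
      (∏ i, ((1 : Matrix (Fin n) (Fin n) R) + t • permMatrix R σ) i (τ i))
        = ∑ S ∈ (Finset.univ : Finset (Fin n)).powerset,
            (t ^ S.card * if ∀ i ∈ S, σ i = τ i then 1 else 0) *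
              if ∀ i ∈ Finset.univ \ S, i = τ i then 1 else 0 := by
    intro τ
    rw [Finset.prod_congr rfl (fun i _ => entry τ i), Finset.prod_add]
    refine Finset.sum_congr rfl fun S _ => ?_
    rw [Finset.prod_mul_distrib, Finset.prod_const, Finset.prod_boole, Finset.prod_boole]
    convert rfl using 4
  rw [Finset.sum_congr rfl (fun τ _ => step1 τ), Finset.sum_comm]
  rw [show (∑ S : Finset (Fin n), if ∀ i ∈ S, σ i ∈ S then t ^ S.card else 0)
      = ∑ S ∈ (Finset.univ : Finset (Fin n)).powerset,
          (if ∀ i ∈ S, σ i ∈ S then t ^ S.card else 0) by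
    rw [Finset.powerset_univ]]
  refine Finset.sum_congr rfl fun S _ => ?_
  by_cases hS : ∀ i ∈ S, σ i ∈ S
  · rw [if_pos hS]
    have hinj : Function.Injective (fun i => if i ∈ S then σ i else i) := by
      intro a b hab
      simp only at hab
      by_cases ha : a ∈ S <;> by_cases hb : b ∈ S
      · rw [if_pos ha, if_pos hb] at hab; exact σ.injective hab
      · rw [if_pos ha, if_neg hb] at hab; exact absurd (hab ▸ hS a ha) hb
      · rw [if_neg ha, if_pos hb] at hab; exact absurd (hab ▸ hS b hb) ha
      · rwa [if_neg ha, if_neg hb] at hab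
    let τ₀ : Equiv.Perm (Fin n) :=
      Equiv.ofBijective _ (Finite.injective_iff_bijective.mp hinj)
    have hτ₀ : ∀ i, τ₀ i = if i ∈ S then σ i else i := fun i => rfl
    rw [Finset.sum_eq_single τ₀]
    · have h1 : ∀ i ∈ S, σ i = τ₀ i := by intro i hi; rw [hτ₀, if_pos hi]
      have h2 : ∀ i ∈ Finset.univ \ S, i = τ₀ i := by
        intro i hi
        rw [hτ₀, if_neg (Finset.mem_sdiff.mp hi).2]
      rw [if_pos h1, if_pos h2, mul_one, mul_one]
    · intro τ _ hτ
      by_cases h1 : ∀ i ∈ S, σ i = τ i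
      · by_cases h2 : ∀ i ∈ Finset.univ \ S, i = τ i
        · exfalso
          apply hτ
          ext i
          rw [hτ₀]
          by_cases hi : i ∈ S
          · rw [if_pos hi, ← h1 i hi]
          · rw [if_neg hi, ← h2 i (Finset.mem_sdiff.mpr ⟨Finset.mem_univ i, hi⟩)]
        · rw [if_neg h2, mul_zero]
      · rw [if_neg h1, mul_zero, zero_mul]
    · intro h; exact absurd (Finset.mem_univ τ₀) h
  · rw [if_neg hS]
    push_neg at hS
    obtain ⟨i, hiS, hσi⟩ := hS
    refine Finset.sum_eq_zero fun τ _ => ?_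
    by_cases h1 : ∀ j ∈ S, σ j = τ j
    · by_cases h2 : ∀ j ∈ Finset.univ \ S, j = τ j
      · exfalso
        have hi1 : τ i = σ i := (h1 i hiS).symm
        have hi2 : τ (σ i) = σ i :=
          (h2 (σ i) (Finset.mem_sdiff.mpr ⟨Finset.mem_univ _, hσi⟩)).symm
        have hieq : i = σ i := τ.injective (hi1.trans hi2.symm)
        exact hσi (by rwa [← hieq])
      · rw [if_neg h2, mul_zero]
    · rw [if_neg h1, mul_zero, zero_mul]

/-- The sum over invariant subsets factors over the cycle structure. -/
lemma sum_invariant_eq {R : Type*} [CommRing R] (σ : Equiv.Perm (Fin n)) (t : R) :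
    (∑ S : Finset (Fin n), if ∀ i ∈ S, σ i ∈ S then t ^ S.card else 0) =
      (1 + t) ^ (Finset.univ.filter fun i => σ i = i).card *
        (σ.cycleType.map fun c => 1 + t ^ c).prod := by
  classical
  set F : Finset (Fin n) := Finset.univ.filter (fun i => σ i = i) with hFdef
  set CF : Finset (Equiv.Perm (Fin n)) := σ.cycleFactorsFinset with hCFdef
  have hmemF : ∀ i, i ∈ F ↔ σ i = i := by
    intro i; simp [hFdef]
  -- rewrite the fixed-point factor
  have hfix : (1 + t) ^ F.card = ∑ A ∈ F.powerset, t ^ A.card := by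
    rw [add_comm, ← Finset.prod_const, Finset.prod_add]
    refine Finset.sum_congr rfl fun A _ => ?_
    rw [Finset.prod_const, Finset.prod_const, one_pow, mul_one]
  -- rewrite the cycle factor
  have hcyc : (σ.cycleType.map fun c => 1 + t ^ c).prod
      = ∑ T ∈ CF.powerset, t ^ (∑ c ∈ T, c.support.card) := by
    rw [Equiv.Perm.cycleType, Multiset.map_map]
    have h1 : (σ.cycleFactorsFinset.1.map
          ((fun c => 1 + t ^ c) ∘ (Finset.card ∘ Equiv.Perm.support))).prod
        = ∏ c ∈ CF, (t ^ c.support.card + 1) := by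
      rw [Finset.prod]
      exact congrArg Multiset.prod (Multiset.map_congr rfl fun c _ => by
        simp [add_comm])
    rw [h1, Finset.prod_add]
    refine Finset.sum_congr rfl fun T _ => ?_
    rw [Finset.prod_const, one_pow, mul_one, Finset.prod_pow_eq_pow_sum]
  rw [hfix, hcyc, Finset.sum_mul_sum]
  -- turn LHS into a sum over the filter of invariant sets
  rw [show (∑ S : Finset (Fin n), if ∀ i ∈ S, σ i ∈ S then t ^ S.card else 0)
      = ∑ S ∈ Finset.univ.filter (fun S : Finset (Fin n) => ∀ i ∈ S, σ i ∈ S),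
          t ^ S.card by rw [Finset.sum_filter]]
  rw [← Finset.sum_product']
  -- the bijection
  have hsuppCF : ∀ c ∈ CF, c.support ⊆ σ.support := fun c hc =>
    Equiv.Perm.mem_cycleFactorsFinset_support_le hc
  have hdisjF : ∀ i ∈ F, i ∉ σ.support := by
    intro i hi
    rw [Equiv.Perm.mem_support, not_not]
    exact (hmemF i).mp hi
  refine (Finset.sum_nbij'
    (i := fun p : Finset (Fin n) × Finset (Equiv.Perm (Fin n)) =>
      p.1 ∪ p.2.biUnion Equiv.Perm.support)
    (j := fun S => (S \ σ.support, CF.filter fun c => c.support ⊆ S))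
    ?_ ?_ ?_ ?_ ?_).symm
  · -- maps into invariant sets
    rintro ⟨A, T⟩ hp
    rw [Finset.mem_product] at hp
    obtain ⟨hA, hT⟩ := hp
    rw [Finset.mem_powerset] at hA hT
    rw [Finset.mem_filter]
    refine ⟨Finset.mem_univ _, ?_⟩
    intro i hi
    rcases Finset.mem_union.mp hi with h | h
    · rw [(hmemF i).mp (hA h)]
      exact Finset.mem_union_left _ h
    · obtain ⟨c, hcT, hic⟩ := Finset.mem_biUnion.mp h
      have hc : c ∈ CF := hT hcT
      obtain ⟨_, hagree⟩ := Equiv.Perm.mem_cycleFactorsFinset_iff.mp hc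
      have : σ i ∈ c.support := by
        rw [← hagree i hic]
        exact Equiv.Perm.apply_mem_support.mpr hic
      exact Finset.mem_union_right _ (Finset.mem_biUnion.mpr ⟨c, hcT, this⟩)
  · -- inverse maps into product
    intro S hS
    rw [Finset.mem_filter] at hS
    rw [Finset.mem_product, Finset.mem_powerset, Finset.mem_powerset]
    constructor
    · intro i hi
      rw [Finset.mem_sdiff] at hi
      rw [hmemF]
      have := hi.2
      rwa [Equiv.Perm.mem_support, not_not] at this
    · exact Finset.filter_subset _ _
  · -- left inverse
    rintro ⟨A, T⟩ hp
    rw [Finset.mem_product] at hp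
    obtain ⟨hA, hT⟩ := hp
    rw [Finset.mem_powerset] at hA hT
    have hAS : ∀ i ∈ A, i ∉ σ.support := fun i hi => hdisjF i (hA hi)
    have hBU : ∀ i ∈ T.biUnion Equiv.Perm.support, i ∈ σ.support := by
      intro i hi
      obtain ⟨c, hcT, hic⟩ := Finset.mem_biUnion.mp hi
      exact hsuppCF c (hT hcT) hic
    ext1
    · -- first component
      ext i
      simp only [Finset.mem_sdiff, Finset.mem_union]
      constructor
      · rintro ⟨h | h, hns⟩
        · exact h
        · exact absurd (hBU i h) hns
      · intro hi
        exact ⟨Or.inl hi, hAS i hi⟩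
    · -- second component
      ext c
      simp only [Finset.mem_filter]
      constructor
      · rintro ⟨hcCF, hsub⟩
        obtain ⟨hcyc, _⟩ := Equiv.Perm.mem_cycleFactorsFinset_iff.mp hcCF
        obtain ⟨x, hx⟩ := Finset.card_pos.mp
          (lt_of_lt_of_le Nat.zero_lt_two hcyc.two_le_card_support)
        have hxS := hsub hx
        have hxsupp : x ∈ σ.support := hsuppCF c hcCF hx
        rcases Finset.mem_union.mp hxS with h | h
        · exact absurd hxsupp (hAS x h)
        · obtain ⟨c', hc'T, hxc'⟩ := Finset.mem_biUnion.mp h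
          by_cases hcc' : c = c'
          · rwa [hcc']
          · exfalso
            have hd := (σ.cycleFactorsFinset_pairwise_disjoint hcCF (hT hc'T)
              hcc').disjoint_support
            exact Finset.disjoint_left.mp hd hx hxc'
      · intro hcT
        refine ⟨hT hcT, ?_⟩
        intro x hx
        exact Finset.mem_union_right _ (Finset.mem_biUnion.mpr ⟨c, hcT, hx⟩)
  · -- right inverse
    intro S hS
    rw [Finset.mem_filter] at hS
    have hinv := hS.2
    ext i
    simp only [Finset.mem_union, Finset.mem_sdiff]
    constructor
    · rintro (⟨hiS, _⟩ | h)
      · exact hiS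
      · obtain ⟨c, hcT, hic⟩ := Finset.mem_biUnion.mp h
        exact (Finset.mem_filter.mp hcT).2 hic
    · intro hiS
      by_cases hisupp : i ∈ σ.support
      · right
        have hcCF : σ.cycleOf i ∈ CF :=
          Equiv.Perm.cycleOf_mem_cycleFactorsFinset_iff.mpr hisupp
        have hic : i ∈ (σ.cycleOf i).support :=
          Equiv.Perm.mem_support_cycleOf_iff.mpr ⟨Equiv.Perm.SameCycle.refl _ _, hisupp⟩
        refine Finset.mem_biUnion.mpr ⟨σ.cycleOf i, ?_, hic⟩
        exact Finset.mem_filter.mpr ⟨hcCF, support_subset_aux hcCF hinv hiS hic⟩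
      · exact Or.inl ⟨hiS, hisupp⟩
  · -- the summands match
    rintro ⟨A, T⟩ hp
    rw [Finset.mem_product] at hp
    obtain ⟨hA, hT⟩ := hp
    rw [Finset.mem_powerset] at hA hT
    have hdisj : Disjoint A (T.biUnion Equiv.Perm.support) := by
      rw [Finset.disjoint_left]
      intro i hiA hiB
      obtain ⟨c, hcT, hic⟩ := Finset.mem_biUnion.mp hiB
      exact hdisjF i (hA hiA) (hsuppCF c (hT hcT) hic)
    have hcard : (A ∪ T.biUnion Equiv.Perm.support).card
        = A.card + ∑ c ∈ T, c.support.card := by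
      rw [Finset.card_union_of_disjoint hdisj, Finset.card_biUnion]
      intro x hx y hy hxy
      exact (σ.cycleFactorsFinset_pairwise_disjoint (hT hx) (hT hy)
        hxy).disjoint_support
    simp only [hcard, pow_add]

end Aux

/-- `per(I + t·P_σ) = Π_ℓ (1 + t^ℓ)^{n_σ(ℓ)}`: the factor for fixed points
(`ℓ = 1`) is `(1+t)^{#fixed points}`, and the cycles of length `≥ 2` are recorded by the
cycle type of `σ`. -/
theorem stmt2 {R : Type*} [CommRing R] (n : ℕ) (σ : Equiv.Perm (Fin n)) (t : R) :
    permanent ((1 : Matrix (Fin n) (Fin n) R) + t • permMatrix R σ) =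
      (1 + t) ^ (Finset.univ.filter fun i => σ i = i).card *
        (σ.cycleType.map fun c => 1 + t ^ c).prod := by
  rw [permanent_eq_sum_invariant σ t, sum_invariant_eq σ t]
end

section
/- Let G be a (finite) subgroup of the symmetric group on {1,…,n}, and for σ ∈ G let P_σ denote its n×n permutation matrix. Then for every real t, (1/|G|) · Σ_{σ ∈ G} per(I + t·P_σ) = Σ_{ℓ=0}^{n} t^ℓ · N_ℓ, where N_ℓ is the number of orbits of the induced action of G on the ℓ-element subsets of {1,…,n}. -/
lemma image_eq_of_fixes {n : ℕ} (S : Finset (Fin n)) (τ : Equiv.Perm (Fin n))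
    (hfix : ∀ i ∉ S, τ i = i) : S.image τ = S := by
  apply Finset.eq_of_subset_of_card_le
  · intro j hj
    rw [Finset.mem_image] at hj
    obtain ⟨i, hi, rfl⟩ := hj
    by_contra hjS
    have := hfix _ hjS
    have : τ i = (τ : Fin n → Fin n) (τ i) := this.symm
    have := τ.injective this
    exact hjS (this ▸ hi)
  · rw [Finset.card_image_of_injective _ τ.injective]

lemma innerSumAux {n : ℕ} (σ : Equiv.Perm (Fin n)) (t : ℝ) (S : Finset (Fin n)) :
    (∑ τ : Equiv.Perm (Fin n),
      (∏ i ∈ S, if σ i = τ i then t else 0) * ∏ i ∈ Sᶜ, if i = τ i then (1:ℝ) else 0) =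
    if S.image σ = S then t ^ S.card else 0 := by
  have key : ∀ τ : Equiv.Perm (Fin n),
      ((∏ i ∈ S, if σ i = τ i then t else 0) * ∏ i ∈ Sᶜ, if i = τ i then (1:ℝ) else 0) ≠ 0 →
      (∀ i ∈ S, τ i = σ i) ∧ (∀ i ∉ S, τ i = i) := by
    intro τ hne
    constructor
    · intro i hi
      by_contra hne'
      refine hne (mul_eq_zero_of_left (Finset.prod_eq_zero hi ?_) _)
      exact if_neg (fun h => hne' h.symm)
    · intro i hi
      by_contra hne'
      refine hne (mul_eq_zero_of_right _ (Finset.prod_eq_zero (Finset.mem_compl.mpr hi) ?_))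
      exact if_neg (fun h => hne' h.symm)
  by_cases h : S.image σ = S
  · -- construct the unique fixed permutation
    have hσS : ∀ i ∈ S, σ i ∈ S := by
      intro i hi; rw [← h]; exact Finset.mem_image_of_mem _ hi
    set f : Fin n → Fin n := fun i => if i ∈ S then σ i else i with hf
    have hinj : Function.Injective f := by
      intro a b hab
      simp only [hf] at hab
      by_cases ha : a ∈ S <;> by_cases hb : b ∈ S <;> simp [ha, hb] at hab
      · exact hab
      · exact absurd (hab ▸ hσS a ha) hb
      · exact absurd (hab.symm ▸ hσS b hb) ha
      · exact hab
    set τ₀ : Equiv.Perm (Fin n) := Equiv.ofBijective f (Finite.injective_iff_bijective.mp hinj)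
      with hτ₀
    have hτ₀app : ∀ i, τ₀ i = f i := fun i => rfl
    rw [if_pos h, Finset.sum_eq_single_of_mem τ₀ (Finset.mem_univ _)]
    · rw [Finset.prod_congr rfl (fun i hi => if_pos (by simp [hτ₀app, hf, hi])),
        Finset.prod_congr rfl (fun i hi => if_pos (by
          simp only [hτ₀app, hf]
          rw [if_neg (Finset.mem_compl.mp hi)])),
        Finset.prod_const, Finset.prod_const, one_pow, mul_one]
    · intro τ _ hτ
      by_contra hne
      obtain ⟨h1, h2⟩ := key τ hne
      apply hτ
      ext i
      by_cases hi : i ∈ S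
      · rw [h1 i hi, hτ₀app, hf]; simp [hi]
      · rw [h2 i hi, hτ₀app, hf]; simp [hi]
  · rw [if_neg h]
    apply Finset.sum_eq_zero
    intro τ _
    by_contra hne
    obtain ⟨h1, h2⟩ := key τ hne
    apply h
    have : S.image σ = S.image τ := Finset.image_congr (fun i hi => (h1 i hi).symm)
    rw [this]
    exact image_eq_of_fixes S τ h2

lemma per_formula {n : ℕ} (σ : Equiv.Perm (Fin n)) (t : ℝ) :
    permanent ((1 : Matrix (Fin n) (Fin n) ℝ) + t • permMatrix ℝ σ) =
    ∑ S : Finset (Fin n), if S.image σ = S then t ^ S.card else 0 := by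
  unfold permanent
  have entry : ∀ (τ : Equiv.Perm (Fin n)) (i : Fin n),
      ((1 : Matrix (Fin n) (Fin n) ℝ) + t • permMatrix ℝ σ) i (τ i) =
      (if σ i = τ i then t else 0) + (if i = τ i then (1:ℝ) else 0) := by
    intro τ i
    simp [Matrix.add_apply, Matrix.one_apply, permMatrix, Matrix.smul_apply, mul_ite,
      add_comm]
  calc ∑ τ : Equiv.Perm (Fin n), ∏ i, ((1 : Matrix (Fin n) (Fin n) ℝ) + t • permMatrix ℝ σ) i (τ i)
      = ∑ τ : Equiv.Perm (Fin n), ∑ S ∈ (Finset.univ : Finset (Fin n)).powerset,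
          (∏ i ∈ S, if σ i = τ i then t else 0) * ∏ i ∈ Finset.univ \ S, if i = τ i then (1:ℝ) else 0 := by
        refine Finset.sum_congr rfl fun τ _ => ?_
        rw [Finset.prod_congr rfl (fun i _ => entry τ i), Finset.prod_add]
    _ = ∑ S : Finset (Fin n), ∑ τ : Equiv.Perm (Fin n),
          (∏ i ∈ S, if σ i = τ i then t else 0) * ∏ i ∈ Sᶜ, if i = τ i then (1:ℝ) else 0 := by
        rw [Finset.sum_comm]
        simp [Finset.powerset_univ, Finset.compl_eq_univ_sdiff]
    _ = ∑ S : Finset (Fin n), if S.image σ = S then t ^ S.card else 0 := by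
        exact Finset.sum_congr rfl fun S _ => innerSumAux σ t S


instance subAct {n : ℕ} (G : Subgroup (Equiv.Perm (Fin n))) (ℓ : ℕ) :
    MulAction G {S : Finset (Fin n) // S.card = ℓ} where
  smul g S := ⟨S.1.image ⇑(g : Equiv.Perm (Fin n)), by
    rw [Finset.card_image_of_injective _ (g : Equiv.Perm (Fin n)).injective, S.2]⟩
  one_smul S := Subtype.ext (by
    show S.1.image ⇑((1 : G) : Equiv.Perm (Fin n)) = S.1
    simp)
  mul_smul g h S := Subtype.ext (by
    show S.1.image ⇑((g * h : G) : Equiv.Perm (Fin n)) =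
      (S.1.image ⇑(h : Equiv.Perm (Fin n))).image ⇑(g : Equiv.Perm (Fin n))
    rw [Finset.image_image]
    rfl)

lemma orbSet_eq {n : ℕ} (G : Subgroup (Equiv.Perm (Fin n))) (S S' : Finset (Fin n))
    (g : Equiv.Perm (Fin n)) (hg : g ∈ G) (hS' : S' = S.image ⇑g) :
    {T | ∃ σ ∈ G, T = S'.image ⇑σ} = {T | ∃ σ ∈ G, T = S.image ⇑σ} := by
  have hback : S = S'.image ⇑g⁻¹ := by
    have hcomp : (⇑g⁻¹ ∘ ⇑g) = id := by ext x; simp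
    rw [hS', Finset.image_image, hcomp, Finset.image_id]
  ext T
  constructor
  · rintro ⟨σ, hσ, rfl⟩
    refine ⟨σ * g, G.mul_mem hσ hg, ?_⟩
    rw [hS', Finset.image_image]
    rfl
  · rintro ⟨σ, hσ, rfl⟩
    refine ⟨σ * g⁻¹, G.mul_mem hσ (G.inv_mem hg), ?_⟩
    rw [hback, Finset.image_image]
    rfl

lemma burnside_count {n : ℕ} (G : Subgroup (Equiv.Perm (Fin n))) [Fintype G] (ℓ : ℕ) :
    ∑ σ : G, (Finset.univ.filter
        (fun S : Finset (Fin n) => S.card = ℓ ∧ S.image ⇑(σ : Equiv.Perm (Fin n)) = S)).card =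
    (Nat.card {O : Set (Finset (Fin n)) // ∃ S : Finset (Fin n), S.card = ℓ ∧
        O = {T | ∃ σ ∈ G, T = S.image ⇑σ}}) * Nat.card G := by
  classical
  set X := {S : Finset (Fin n) // S.card = ℓ} with hX
  have hsmul : ∀ (σ : G) (x : X), (σ • x).1 = x.1.image ⇑(σ : Equiv.Perm (Fin n)) :=
    fun σ x => rfl
  haveI : ∀ g : G, Fintype (MulAction.fixedBy X g) := fun g => (Set.toFinite _).fintype
  haveI : Fintype (Quotient (MulAction.orbitRel G X)) :=
    @Fintype.ofFinite _ (Quotient.finite _)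
  have hburn := MulAction.sum_card_fixedBy_eq_card_orbits_mul_card_group G X
  -- Step A : each fixed-point count equals the filter card
  have hA : ∀ σ : G, Fintype.card (MulAction.fixedBy X σ) =
      (Finset.univ.filter
        (fun S : Finset (Fin n) => S.card = ℓ ∧ S.image ⇑(σ : Equiv.Perm (Fin n)) = S)).card := by
    intro σ
    rw [← Fintype.card_coe]
    refine Fintype.card_congr ⟨fun x => ⟨x.1.1, ?_⟩, fun S => ⟨⟨S.1, (Finset.mem_filter.mp S.2).2.1⟩, ?_⟩, fun x => Subtype.ext (Subtype.ext rfl), fun S => Subtype.ext rfl⟩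
    · have hx : (σ • x.1 : X) = x.1 := x.2
      have h2 : x.1.1.image ⇑(σ : Equiv.Perm (Fin n)) = x.1.1 :=
        (hsmul σ x.1).symm.trans (congrArg Subtype.val hx)
      exact Finset.mem_filter.mpr ⟨Finset.mem_univ _, x.1.2, h2⟩
    · have h2 := (Finset.mem_filter.mp S.2).2.2
      exact Subtype.ext ((hsmul σ _).trans h2)
  -- Step B : the number of orbits equals the Nat.card of the subtype of orbit sets
  have hB : Nat.card (Quotient (MulAction.orbitRel G X)) =
      Nat.card {O : Set (Finset (Fin n)) // ∃ S : Finset (Fin n), S.card = ℓ ∧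
        O = {T | ∃ σ ∈ G, T = S.image ⇑σ}} := by
    refine Nat.card_eq_of_bijective
      (Quotient.lift (fun x : X => (⟨{T | ∃ σ ∈ G, T = x.1.image ⇑σ}, x.1, x.2, rfl⟩ :
        {O : Set (Finset (Fin n)) // ∃ S : Finset (Fin n), S.card = ℓ ∧
          O = {T | ∃ σ ∈ G, T = S.image ⇑σ}})) ?_) ⟨?_, ?_⟩
    · rintro x y ⟨g, rfl⟩
      exact Subtype.ext (orbSet_eq G y.1 _ (g : Equiv.Perm (Fin n)) g.2 (hsmul g y))
    · refine Quotient.ind fun x => Quotient.ind fun y h => ?_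
      have hset : {T | ∃ σ ∈ G, T = x.1.image ⇑σ} = {T | ∃ σ ∈ G, T = y.1.image ⇑σ} :=
        congrArg Subtype.val h
      have hx : x.1 ∈ {T | ∃ σ ∈ G, T = x.1.image ⇑σ} := ⟨1, G.one_mem, by simp⟩
      rw [hset] at hx
      obtain ⟨σ, hσ, hxy⟩ := hx
      exact Quotient.sound ⟨⟨σ, hσ⟩, Subtype.ext ((hsmul ⟨σ, hσ⟩ y).trans hxy.symm)⟩
    · rintro ⟨O, S, hS, rfl⟩
      exact ⟨Quotient.mk _ ⟨S, hS⟩, rfl⟩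
  calc ∑ σ : G, (Finset.univ.filter
        (fun S : Finset (Fin n) => S.card = ℓ ∧ S.image ⇑(σ : Equiv.Perm (Fin n)) = S)).card
      = ∑ σ : G, Fintype.card (MulAction.fixedBy X σ) :=
        Finset.sum_congr rfl fun σ _ => (hA σ).symm
    _ = Fintype.card (Quotient (MulAction.orbitRel G X)) * Fintype.card G := hburn
    _ = _ := by rw [← Nat.card_eq_fintype_card, ← Nat.card_eq_fintype_card, hB]


/-- `(1/|G|) · Σ_{σ ∈ G} per(I + t·P_σ) = Σ_{ℓ=0}^{n} t^ℓ · N_ℓ`, where `N_ℓ` is the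
number of orbits of the induced action of `G` on the `ℓ`-element subsets of `{1,…,n}`
(an orbit being a set of the form `{T | ∃ σ ∈ G, T = σ·S}` for some `ℓ`-set `S`). -/
theorem stmt3 (n : ℕ) (G : Subgroup (Equiv.Perm (Fin n))) [Fintype G] (t : ℝ) :
    (1 / (Nat.card G : ℝ)) *
        ∑ σ : G, permanent ((1 : Matrix (Fin n) (Fin n) ℝ) +
          t • permMatrix ℝ (σ : Equiv.Perm (Fin n))) =
      ∑ ℓ ∈ Finset.range (n + 1), t ^ ℓ *
        (Nat.card {O : Set (Finset (Fin n)) //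
          ∃ S : Finset (Fin n), S.card = ℓ ∧
            O = {T | ∃ σ ∈ G, T = S.image (⇑σ)}} : ℝ) := by
  classical
  have hGne : (Nat.card G : ℝ) ≠ 0 := by
    have : 0 < Nat.card G := Nat.card_pos
    positivity
  have key : (∑ σ : G, permanent ((1 : Matrix (Fin n) (Fin n) ℝ) +
          t • permMatrix ℝ (σ : Equiv.Perm (Fin n)))) =
      ∑ ℓ ∈ Finset.range (n + 1), t ^ ℓ *
        ((Nat.card {O : Set (Finset (Fin n)) //
          ∃ S : Finset (Fin n), S.card = ℓ ∧
            O = {T | ∃ σ ∈ G, T = S.image (⇑σ)}} : ℝ) * (Nat.card G : ℝ)) := by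
    calc (∑ σ : G, permanent ((1 : Matrix (Fin n) (Fin n) ℝ) +
          t • permMatrix ℝ (σ : Equiv.Perm (Fin n))))
        = ∑ σ : G, ∑ S : Finset (Fin n),
            if S.image ⇑(σ : Equiv.Perm (Fin n)) = S then t ^ S.card else 0 :=
          Finset.sum_congr rfl fun σ _ => per_formula _ t
      _ = ∑ S : Finset (Fin n), ∑ σ : G,
            (if S.image ⇑(σ : Equiv.Perm (Fin n)) = S then t ^ S.card else 0) :=
          Finset.sum_comm
      _ = ∑ ℓ ∈ Finset.range (n + 1),
            ∑ S ∈ Finset.univ.filter (fun S : Finset (Fin n) => S.card = ℓ), ∑ σ : G,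
            (if S.image ⇑(σ : Equiv.Perm (Fin n)) = S then t ^ S.card else 0) := by
          rw [Finset.sum_fiberwise_of_maps_to]
          intro S _
          exact Finset.mem_range.mpr (Nat.lt_succ_of_le (by simpa using Finset.card_le_univ S))
      _ = ∑ ℓ ∈ Finset.range (n + 1), t ^ ℓ *
            ((Nat.card {O : Set (Finset (Fin n)) //
              ∃ S : Finset (Fin n), S.card = ℓ ∧
                O = {T | ∃ σ ∈ G, T = S.image (⇑σ)}} : ℝ) * (Nat.card G : ℝ)) := by
          refine Finset.sum_congr rfl fun ℓ _ => ?_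
          calc ∑ S ∈ Finset.univ.filter (fun S : Finset (Fin n) => S.card = ℓ), ∑ σ : G,
                (if S.image ⇑(σ : Equiv.Perm (Fin n)) = S then t ^ S.card else 0)
              = ∑ S ∈ Finset.univ.filter (fun S : Finset (Fin n) => S.card = ℓ), ∑ σ : G,
                t ^ ℓ * (if S.image ⇑(σ : Equiv.Perm (Fin n)) = S then (1:ℝ) else 0) := by
                refine Finset.sum_congr rfl fun S hS => Finset.sum_congr rfl fun σ _ => ?_
                rw [(Finset.mem_filter.mp hS).2]
                split_ifs <;> ring
            _ = t ^ ℓ * ∑ σ : G,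
                ∑ S ∈ Finset.univ.filter (fun S : Finset (Fin n) => S.card = ℓ),
                (if S.image ⇑(σ : Equiv.Perm (Fin n)) = S then (1:ℝ) else 0) := by
                rw [Finset.sum_comm, Finset.mul_sum]
                refine Finset.sum_congr rfl fun σ _ => ?_
                rw [Finset.mul_sum]
            _ = t ^ ℓ * ∑ σ : G, ((Finset.univ.filter
                  (fun S : Finset (Fin n) => S.card = ℓ ∧
                    S.image ⇑(σ : Equiv.Perm (Fin n)) = S)).card : ℝ) := by
                congr 1
                refine Finset.sum_congr rfl fun σ _ => ?_
                rw [Finset.sum_boole, Finset.filter_filter]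
            _ = t ^ ℓ *
                ((Nat.card {O : Set (Finset (Fin n)) //
                  ∃ S : Finset (Fin n), S.card = ℓ ∧
                    O = {T | ∃ σ ∈ G, T = S.image (⇑σ)}} : ℝ) * (Nat.card G : ℝ)) := by
                congr 1
                rw [← Nat.cast_sum, burnside_count G ℓ]
                push_cast
                ring
  rw [key, Finset.mul_sum]
  refine Finset.sum_congr rfl fun ℓ _ => ?_
  field_simp
end

section
/- Let n be a natural number and s, t elements of a commutative ring. Let I be the n×n identity matrix and J the n×n all-ones matrix. Then per(sI + tJ) = Σ_{ℓ=0}^{n} (n!/(n-ℓ)!) · s^{n-ℓ} t^{ℓ}. -/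
open Finset

lemma count_fix (n : ℕ) (A : Finset (Fin n)) :
    (Finset.univ.filter fun σ : Equiv.Perm (Fin n) => ∀ i ∈ A, σ i = i).card
      = (n - A.card).factorial := by
  rw [← Fintype.card_subtype]
  have e : {σ : Equiv.Perm (Fin n) // ∀ i ∈ A, σ i = i}
      ≃ Equiv.Perm {a : Fin n // a ∉ A} := by
    refine (Equiv.subtypeEquivRight (q := fun σ : Equiv.Perm (Fin n) =>
      ∀ a, ¬ a ∉ A → σ a = a) fun σ => ?_).trans
      (Equiv.Perm.subtypeEquivSubtypePerm (fun a : Fin n => a ∉ A)).symm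
    simp [not_not]
  rw [Fintype.card_congr e, Fintype.card_perm]
  congr 1
  rw [Fintype.card_subtype]
  simp [Finset.filter_not, Finset.card_sdiff_of_subset (Finset.subset_univ A)]

lemma prod_ite_fix {R : Type*} [CommRing R] (s : R) {n : ℕ} (σ : Equiv.Perm (Fin n))
    (A : Finset (Fin n)) :
    (∏ i ∈ A, (if i = σ i then s else 0))
      = if (∀ i ∈ A, σ i = i) then s ^ A.card else 0 := by
  by_cases h : ∀ i ∈ A, σ i = i
  · rw [if_pos h]
    rw [Finset.prod_congr rfl (fun i hi => if_pos (h i hi).symm), Finset.prod_const]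
  · rw [if_neg h]
    push_neg at h
    obtain ⟨i, hi, hne⟩ := h
    exact Finset.prod_eq_zero hi (if_neg (fun he => hne he.symm))

/-- `per(sI + tJ) = Σ_{ℓ=0}^{n} (n!/(n-ℓ)!) s^{n-ℓ} t^ℓ`, where `n!/(n-ℓ)!` is the
falling factorial `n.descFactorial ℓ`, acting on the ring via the natural cast. -/
theorem stmt4 {R : Type*} [CommRing R] (n : ℕ) (s t : R) :
    permanent (s • (1 : Matrix (Fin n) (Fin n) R) +
        t • Matrix.of (fun _ _ => (1 : R))) =
      ∑ ℓ ∈ Finset.range (n + 1), (n.descFactorial ℓ : R) * s ^ (n - ℓ) * t ^ ℓ := by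
  unfold permanent
  set M : Matrix (Fin n) (Fin n) R := s • (1 : Matrix (Fin n) (Fin n) R) +
      t • Matrix.of (fun _ _ => (1 : R)) with hM
  have entry : ∀ i j : Fin n, M i j = (if i = j then s else 0) + t := by
    intro i j
    simp [hM, Matrix.add_apply, Matrix.smul_apply, Matrix.one_apply, smul_eq_mul, mul_ite]
  calc (∑ σ : Equiv.Perm (Fin n), ∏ i, M i (σ i))
      = ∑ σ : Equiv.Perm (Fin n), ∑ A ∈ (Finset.univ : Finset (Fin n)).powerset,
          (if (∀ i ∈ A, σ i = i) then s ^ A.card else 0) * t ^ (n - A.card) := by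
        refine Finset.sum_congr rfl fun σ _ => ?_
        rw [Finset.prod_congr rfl fun i _ => entry i (σ i), Finset.prod_add]
        refine Finset.sum_congr rfl fun A hA => ?_
        rw [prod_ite_fix, Finset.prod_const, Finset.card_sdiff_of_subset (Finset.subset_univ A),
          Finset.card_univ, Fintype.card_fin]
    _ = ∑ A ∈ (Finset.univ : Finset (Fin n)).powerset,
          ((n - A.card).factorial : R) * (s ^ A.card * t ^ (n - A.card)) := by
        rw [Finset.sum_comm]
        refine Finset.sum_congr rfl fun A _ => ?_
        rw [← Finset.sum_filter_add_sum_filter_not Finset.univ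
          (fun σ : Equiv.Perm (Fin n) => ∀ i ∈ A, σ i = i)]
        rw [Finset.sum_congr rfl (fun σ hσ => by
            rw [if_pos (Finset.mem_filter.mp hσ).2]),
          Finset.sum_congr (rfl : Finset.univ.filter (fun σ : Equiv.Perm (Fin n) =>
            ¬ ∀ i ∈ A, σ i = i) = _) (fun σ hσ => by
            rw [if_neg (Finset.mem_filter.mp hσ).2, zero_mul]),
          Finset.sum_const, Finset.sum_const_zero, add_zero, count_fix,
          nsmul_eq_mul]
    _ = ∑ j ∈ Finset.range (n + 1), (n.choose j : R) * ((n - j).factorial : R)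
          * (s ^ j * t ^ (n - j)) := by
        rw [Finset.sum_powerset]
        simp only [Finset.card_univ, Fintype.card_fin]
        refine Finset.sum_congr rfl fun j hj => ?_
        rw [Finset.sum_congr rfl fun A hA => by
          rw [(Finset.mem_powersetCard.mp hA).2], Finset.sum_const,
          Finset.card_powersetCard, Finset.card_univ, Fintype.card_fin,
          nsmul_eq_mul, mul_assoc]
    _ = ∑ ℓ ∈ Finset.range (n + 1), (n.descFactorial ℓ : R) * s ^ (n - ℓ) * t ^ ℓ := by
        conv_rhs => rw [← Finset.sum_range_reflect]
        refine Finset.sum_congr rfl fun j hj => ?_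
        have hj' : j ≤ n := Nat.lt_succ_iff.mp (Finset.mem_range.mp hj)
        have h1 : n + 1 - 1 - j = n - j := by omega
        have h2 : n - (n - j) = j := by omega
        rw [h1, h2, Nat.descFactorial_eq_factorial_mul_choose, Nat.choose_symm hj']
        push_cast
        ring
end

section
/- For real numbers s, t, z with |tz| < 1, the series Σ_{n=0}^{∞} (z^n/n!) · p_n(s,t) converges with sum e^{sz}/(1 - tz), where p_n(s,t) = Σ_{ℓ=0}^{n} (n!/(n-ℓ)!) s^{n-ℓ} t^{ℓ} is the permanent of the n×n matrix sI_n + tJ_n (with p_0(s,t) = 1). -/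
/-- `p_n(s,t) = per(sI_n + tJ_n)` (with `p_0 = 1`, the permanent of the empty matrix). -/
def p (n : ℕ) (s t : ℝ) : ℝ :=
  permanent (s • (1 : Matrix (Fin n) (Fin n) ℝ) + t • Matrix.of (fun _ _ => (1 : ℝ)))

open Finset in
lemma count_fixing (n : ℕ) (S : Finset (Fin n)) :
    Fintype.card {σ : Equiv.Perm (Fin n) // ∀ i ∈ S, σ i = i} = (n - S.card).factorial := by
  have e1 : Equiv.Perm {x : Fin n // x ∉ S} ≃ {σ : Equiv.Perm (Fin n) // ∀ i ∈ S, σ i = i} :=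
    (Equiv.Perm.subtypeEquivSubtypePerm (fun x => x ∉ S)).trans
      (Equiv.subtypeEquivRight (fun σ => by
        constructor
        · intro hσ i hi; exact hσ i (not_not_intro hi)
        · intro hσ i hi; exact hσ i (not_not.mp hi)))
  rw [← Fintype.card_congr e1, Fintype.card_perm, Fintype.card_subtype]
  congr 1
  rw [Finset.filter_not, Finset.filter_mem_eq_inter, Finset.univ_inter,
    Finset.card_sdiff_of_subset (Finset.subset_univ S), Finset.card_univ, Fintype.card_fin]

open Finset in
lemma p_eq (n : ℕ) (s t : ℝ) :
    p n s t = ∑ k ∈ range (n + 1),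
      ((n.factorial : ℝ) / k.factorial) * s ^ k * t ^ (n - k) := by
  have key : p n s t = ∑ σ : Equiv.Perm (Fin n),
      ∏ i, ((if σ i = i then s else 0) + t) := by
    unfold p permanent
    refine Finset.sum_congr rfl fun σ _ => Finset.prod_congr rfl fun i _ => ?_
    simp [Matrix.one_apply, eq_comm]
  rw [key]
  have step1 : ∀ σ : Equiv.Perm (Fin n),
      ∏ i, ((if σ i = i then s else 0) + t)
        = ∑ S ∈ (univ : Finset (Fin n)).powerset,
          (if ∀ i ∈ S, σ i = i then s ^ S.card * t ^ (n - S.card) else 0) := by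
    intro σ
    rw [Finset.prod_add]
    refine Finset.sum_congr rfl fun S hS => ?_
    by_cases hfix : ∀ i ∈ S, σ i = i
    · rw [if_pos hfix]
      rw [Finset.prod_congr rfl (fun i hi => if_pos (hfix i hi)),
        Finset.prod_const, Finset.prod_const, Finset.card_sdiff_of_subset (Finset.mem_powerset.mp hS),
        Finset.card_univ, Fintype.card_fin]
    · rw [if_neg hfix]
      push_neg at hfix
      obtain ⟨i, hi, hne⟩ := hfix
      have hz : (∏ i ∈ S, if σ i = i then s else (0:ℝ)) = 0 :=
        Finset.prod_eq_zero hi (if_neg hne)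
      rw [hz, zero_mul]
  rw [Finset.sum_congr rfl fun σ _ => step1 σ, Finset.sum_comm]
  have perS : ∀ S : Finset (Fin n),
      (∑ σ : Equiv.Perm (Fin n), if ∀ i ∈ S, σ i = i then s ^ S.card * t ^ (n - S.card) else 0)
        = ((n - S.card).factorial : ℝ) * (s ^ S.card * t ^ (n - S.card)) := by
    intro S
    rw [← Finset.sum_filter, Finset.sum_const, nsmul_eq_mul]
    congr 2
    rw [← count_fixing n S, Fintype.card_subtype]
  rw [Finset.sum_congr rfl fun S _ => perS S]
  rw [Finset.sum_powerset]
  rw [Finset.card_univ, Fintype.card_fin]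
  refine Finset.sum_congr rfl fun k hk => ?_
  rw [Finset.sum_powersetCard k (univ : Finset (Fin n))
    (fun m => ((n - m).factorial : ℝ) * (s ^ m * t ^ (n - m))), Finset.card_univ,
    Fintype.card_fin, nsmul_eq_mul]
  have hk' : k ≤ n := Nat.lt_succ_iff.mp (Finset.mem_range.mp hk)
  have hfac : ((n.choose k : ℝ)) * ((n - k).factorial : ℝ) = (n.factorial : ℝ) / k.factorial := by
    rw [eq_div_iff (by positivity)]
    norm_cast
    rw [mul_right_comm]
    exact Nat.choose_mul_factorial_mul_factorial hk'
  rw [← mul_assoc, hfac, mul_assoc, ← mul_assoc]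

/-- For `|tz| < 1`, `Σ_{n} (z^n/n!) p_n(s,t) = e^{sz}/(1 - tz)`. -/
theorem stmt5 (s t z : ℝ) (h : |t * z| < 1) :
    HasSum (fun n : ℕ => z ^ n / n.factorial * p n s t)
      (Real.exp (s * z) / (1 - t * z)) := by
  have hf : Summable (fun k : ℕ => ‖(s * z) ^ k / k.factorial‖) := by
    have := Real.summable_pow_div_factorial |s * z|
    refine this.congr fun k => ?_
    simp [Real.norm_eq_abs, abs_div, abs_pow, Nat.abs_cast, abs_mul]
  have hg : Summable (fun m : ℕ => ‖(t * z) ^ m‖) := by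
    have := summable_geometric_of_abs_lt_one (r := |t * z|) (by rwa [abs_abs])
    refine this.congr fun m => ?_
    rw [norm_pow, Real.norm_eq_abs]
  have hmain := hasSum_sum_range_mul_of_summable_norm hf hg
  have hexp : (∑' n : ℕ, (s * z) ^ n / n.factorial) = Real.exp (s * z) := by
    rw [Real.exp_eq_exp_ℝ, NormedSpace.exp_eq_tsum_div]
  have hgeo : (∑' n : ℕ, (t * z) ^ n) = (1 - t * z)⁻¹ := tsum_geometric_of_abs_lt_one h
  rw [hexp, hgeo, ← div_eq_mul_inv] at hmain
  have hfun : (fun n : ℕ => z ^ n / n.factorial * p n s t)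
      = fun n => ∑ k ∈ Finset.range (n + 1),
          (s * z) ^ k / k.factorial * (t * z) ^ (n - k) := by
    funext n
    rw [p_eq, Finset.mul_sum]
    refine Finset.sum_congr rfl fun k hk => ?_
    have hk' : k ≤ n := Nat.lt_succ_iff.mp (Finset.mem_range.mp hk)
    rw [← pow_mul_pow_sub z hk', mul_pow, mul_pow]
    have h1 : (n.factorial : ℝ) ≠ 0 := by positivity
    have h2 : (k.factorial : ℝ) ≠ 0 := by positivity
    field_simp
  rw [hfun]
  exact hmain
end

section
/- Fix a natural number m and real numbers x, t, z with |tz| < 1. Then Σ_{n=0}^{∞} (z^n/n!) · h_{n,m}(x,t) converges with sum t^m · m! · e^{zx}/(1 - tz)^{m+1}, where h_{n,m}(x,t) = ∫_0^∞ (x + ty)^n (ty)^m e^{-y} dy. -/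
open MeasureTheory Real Set

lemma poly_exp_int (j : ℕ) : IntegrableOn (fun y : ℝ => y ^ j * Real.exp (-y)) (Ioi 0) := by
  have := Real.GammaIntegral_convergent (s := j + 1) (by positivity)
  refine this.congr_fun (fun y hy => ?_) measurableSet_Ioi
  rw [mul_comm]
  congr 1
  rw [show ((j : ℝ) + 1 - 1) = (j : ℝ) by ring]
  simp [Real.rpow_natCast]

lemma poly_exp_int_rate (j : ℕ) {b : ℝ} (hb : 0 < b) :
    IntegrableOn (fun y : ℝ => y ^ j * Real.exp (-(b * y))) (Ioi 0) := by
  have h1 : IntegrableOn (fun y : ℝ => (b * y) ^ j * Real.exp (-(b * y))) (Ioi 0) := by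
    have := (integrableOn_Ioi_comp_mul_left_iff
      (fun y : ℝ => y ^ j * Real.exp (-y)) 0 hb).mpr (by simpa using poly_exp_int j)
    simpa using this
  have h2 := h1.div_const (b ^ j)
  refine IntegrableOn.congr_fun h2 (fun y _ => ?_) measurableSet_Ioi
  field_simp [mul_pow]
  ring

lemma key_int (n m : ℕ) (x t : ℝ) :
    IntegrableOn (fun y : ℝ => (x + t * y) ^ n * (t * y) ^ m * Real.exp (-y)) (Ioi 0) := by
  have hint : IntegrableOn (fun y : ℝ => ∑ k ∈ Finset.range (n + 1),
      (x ^ k * t ^ (n - k) * (n.choose k : ℝ) * t ^ m) * (y ^ (n - k + m) * Real.exp (-y)))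
      (Ioi 0) := by
    apply integrable_finset_sum
    intro k _
    exact (poly_exp_int (n - k + m)).const_mul _
  refine IntegrableOn.congr_fun hint (fun y _ => ?_) measurableSet_Ioi
  rw [add_pow]
  rw [Finset.sum_mul, Finset.sum_mul]
  apply Finset.sum_congr rfl
  intro k _
  rw [mul_pow, mul_pow, pow_add]
  ring

lemma val_int (m : ℕ) {b : ℝ} (hb : 0 < b) :
    ∫ y in Ioi (0:ℝ), y ^ m * Real.exp (-(b * y)) = (m.factorial : ℝ) / b ^ (m + 1) := by
  have := Real.integral_rpow_mul_exp_neg_mul_Ioi (a := (m : ℝ) + 1) (r := b)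
    (by positivity) hb
  rw [show ((m : ℝ) + 1 - 1) = (m : ℝ) by ring] at this
  simp_rw [Real.rpow_natCast] at this
  rw [this, Real.Gamma_nat_eq_factorial,
    show ((m:ℝ)+1) = ((m+1:ℕ):ℝ) by push_cast; ring, Real.rpow_natCast,
    one_div, inv_pow, inv_mul_eq_div]

/-- The exponential moment polynomials `h_{n,m}(x,t) = ∫_0^∞ (x+ty)^n (ty)^m e^{-y} dy`. -/
noncomputable def expMoment (n m : ℕ) (x t : ℝ) : ℝ :=
  ∫ y in Set.Ioi (0 : ℝ), (x + t * y) ^ n * (t * y) ^ m * Real.exp (-y)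

/-- For `|tz| < 1`, `Σ_{n} (z^n/n!) h_{n,m}(x,t) = t^m · m! · e^{zx}/(1-tz)^{m+1}`. -/
theorem stmt6 (m : ℕ) (x t z : ℝ) (h : |t * z| < 1) :
    HasSum (fun n : ℕ => z ^ n / n.factorial * expMoment n m x t)
      (t ^ m * m.factorial * Real.exp (z * x) / (1 - t * z) ^ (m + 1)) := by
  have hb : 0 < 1 - t * z := by
    have := (abs_lt.mp h).2; linarith
  have hb' : 0 < 1 - |t| * |z| := by
    rw [← abs_mul]; linarith [(abs_lt.mp h).2, le_abs_self (t*z), abs_nonneg (t*z)]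
  set F : ℕ → ℝ → ℝ :=
    fun n y => z ^ n / n.factorial * ((x + t * y) ^ n * (t * y) ^ m * Real.exp (-y)) with hF
  have hF_int : ∀ n, IntegrableOn (F n) (Ioi 0) := fun n => (key_int n m x t).const_mul _
  -- the dominating function
  set G : ℕ → ℝ → ℝ :=
    fun n y => |z| ^ n / n.factorial * ((|x| + |t| * y) ^ n * (|t| * y) ^ m * Real.exp (-y))
    with hG
  have hG_int : ∀ n, IntegrableOn (G n) (Ioi 0) := fun n => (key_int n m |x| |t|).const_mul _
  have hFG : ∀ n, ∀ y ∈ Ioi (0:ℝ), ‖F n y‖ ≤ G n y := by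
    intro n y hy
    have hy0 : (0:ℝ) ≤ y := (le_of_lt hy)
    have h1 : |x + t * y| ≤ |x| + |t| * y := by
      calc |x + t * y| ≤ |x| + |t * y| := abs_add_le _ _
        _ = |x| + |t| * y := by rw [abs_mul, abs_of_nonneg hy0]
    simp only [hF, hG, norm_mul, norm_div, norm_pow, Real.norm_eq_abs]
    rw [abs_of_nonneg (by positivity : (0:ℝ) ≤ (n.factorial : ℝ)),
      Real.abs_exp, abs_of_nonneg hy0]
    gcongr
  -- the integrable envelope
  set Φ : ℝ → ℝ :=
    fun y => Real.exp (|z| * (|x| + |t| * y)) * ((|t| * y) ^ m * Real.exp (-y)) with hΦdef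
  have hΦeq : ∀ y : ℝ,
      Φ y = (Real.exp (|z| * |x|) * |t| ^ m) * (y ^ m * Real.exp (-((1 - |t| * |z|) * y))) := by
    intro y
    simp only [hΦdef]
    rw [show |z| * (|x| + |t| * y) = |z| * |x| + |z| * (|t| * y) by ring, Real.exp_add,
      show -((1 - |t| * |z|) * y) = |z| * (|t| * y) + (-y) by ring, Real.exp_add, mul_pow]
    ring
  have hΦ_int : IntegrableOn Φ (Ioi 0) := by
    have := ((poly_exp_int_rate m hb').const_mul (Real.exp (|z| * |x|) * |t| ^ m))
    exact IntegrableOn.congr_fun this (fun y _ => (hΦeq y).symm) measurableSet_Ioi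
  -- summability of the integrals of norms
  have hsum : Summable fun n => ∫ y in Ioi (0:ℝ), ‖F n y‖ := by
    apply summable_of_sum_range_le (c := ∫ y in Ioi (0:ℝ), Φ y)
      (fun n => integral_nonneg fun y => norm_nonneg _)
    intro N
    have step1 : ∑ n ∈ Finset.range N, ∫ y in Ioi (0:ℝ), ‖F n y‖
        ≤ ∑ n ∈ Finset.range N, ∫ y in Ioi (0:ℝ), G n y := by
      apply Finset.sum_le_sum
      intro n _
      exact setIntegral_mono_on (hF_int n).norm (hG_int n) measurableSet_Ioi (hFG n)
    have step2 : ∑ n ∈ Finset.range N, ∫ y in Ioi (0:ℝ), G n y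
        = ∫ y in Ioi (0:ℝ), ∑ n ∈ Finset.range N, G n y :=
      (integral_finset_sum _ fun n _ => hG_int n).symm
    have step3 : ∫ y in Ioi (0:ℝ), ∑ n ∈ Finset.range N, G n y ≤ ∫ y in Ioi (0:ℝ), Φ y := by
      apply setIntegral_mono_on (integrable_finset_sum _ fun n _ => hG_int n) hΦ_int
        measurableSet_Ioi
      intro y hy
      have hy0 : (0:ℝ) ≤ y := le_of_lt hy
      have hc : (0:ℝ) ≤ (|t| * y) ^ m * Real.exp (-y) := by positivity
      have hrw : ∑ n ∈ Finset.range N, G n y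
          = (∑ n ∈ Finset.range N, (|z| * (|x| + |t| * y)) ^ n / n.factorial)
            * ((|t| * y) ^ m * Real.exp (-y)) := by
        rw [Finset.sum_mul]
        apply Finset.sum_congr rfl
        intro n _
        simp only [hG, mul_pow]
        ring
      rw [hrw]
      simp only [hΦdef]
      exact mul_le_mul_of_nonneg_right (Real.sum_le_exp_of_nonneg (by positivity) N) hc
    linarith
  -- interchange sum and integral
  have hmain := hasSum_integral_of_summable_integral_norm
    (μ := volume.restrict (Ioi 0)) hF_int hsum
  -- identify the sum under the integral
  have htsum : ∀ y : ℝ, ∑' n, F n y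
      = Real.exp (z * (x + t * y)) * ((t * y) ^ m * Real.exp (-y)) := by
    intro y
    have he : HasSum (fun n : ℕ => (z * (x + t * y)) ^ n / n.factorial)
        (Real.exp (z * (x + t * y))) := by
      rw [Real.exp_eq_exp_ℝ]
      exact NormedSpace.expSeries_div_hasSum_exp _
    have := he.mul_right ((t * y) ^ m * Real.exp (-y))
    have h2 : (fun n : ℕ => (z * (x + t * y)) ^ n / n.factorial
        * ((t * y) ^ m * Real.exp (-y))) = fun n => F n y := by
      funext n
      simp only [hF, mul_pow]
      ring
    rw [h2] at this
    exact this.tsum_eq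
  -- compute the integral of the limit
  have hval : ∫ y in Ioi (0:ℝ), (∑' n, F n y)
      = t ^ m * m.factorial * Real.exp (z * x) / (1 - t * z) ^ (m + 1) := by
    have heq : ∀ y : ℝ, (∑' n, F n y)
        = (Real.exp (z * x) * t ^ m) * (y ^ m * Real.exp (-((1 - t * z) * y))) := by
      intro y
      rw [htsum y,
        show z * (x + t * y) = z * x + z * (t * y) by ring, Real.exp_add,
        show -((1 - t * z) * y) = z * (t * y) + (-y) by ring, Real.exp_add, mul_pow]
      ring
    simp_rw [heq]
    rw [integral_const_mul, val_int m hb]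
    field_simp
  -- assemble
  have hfun : (fun n : ℕ => z ^ n / n.factorial * expMoment n m x t)
      = fun n => ∫ y in Ioi (0:ℝ), F n y := by
    funext n
    rw [expMoment, ← integral_const_mul]
  rw [hfun, ← hval]
  exact hmain
end

section
/- Let n, ℓ be natural numbers with ℓ ≤ n and let s, t be real numbers. Then the sum over all ℓ-element subsets I of {1,…,n} of the permanent of the principal submatrix of sI_n + tJ_n with rows and columns indexed by I equals (n!/(n-ℓ)!) · Σ_{k=0}^{ℓ} s^k t^{ℓ-k}/k!. -/
open Finset

/-- Number of permutations fixing a given set pointwise. -/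
lemma card_fixing {α : Type*} [Fintype α] [DecidableEq α] (F : Finset α) :
    (Finset.univ.filter (fun σ : Equiv.Perm α => ∀ i ∈ F, σ i = i)).card =
      (Fintype.card α - F.card).factorial := by
  have h1 : Fintype.card {σ : Equiv.Perm α // ∀ a, ¬(a ∉ F) → σ a = a} =
      (Fintype.card α - F.card).factorial := by
    rw [← Fintype.card_congr (Equiv.Perm.subtypeEquivSubtypePerm (fun a => a ∉ F)),
      Fintype.card_perm, Fintype.card_subtype_compl, Fintype.card_coe]
  rw [← Fintype.card_subtype] at *
  convert h1 using 3 with σ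
  simp [not_not]

lemma perm_sum (s t : ℝ) (α : Type*) [Fintype α] [DecidableEq α] :
    ∑ σ : Equiv.Perm α, ∏ i, ((if σ i = i then s else 0) + t) =
    ∑ k ∈ Finset.range (Fintype.card α + 1),
      ((Fintype.card α).choose k * (Fintype.card α - k).factorial : ℝ) *
        (s ^ k * t ^ (Fintype.card α - k)) := by
  set m := Fintype.card α with hm
  have step1 : ∀ σ : Equiv.Perm α, ∏ i, ((if σ i = i then s else 0) + t) =
      ∑ F ∈ (Finset.univ : Finset α).powerset,
        (if ∀ i ∈ F, σ i = i then s ^ F.card else 0) * t ^ (m - F.card) := by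
    intro σ
    rw [Finset.prod_add]
    refine Finset.sum_congr rfl fun F hF => ?_
    congr 1
    · split_ifs with h
      · rw [Finset.prod_congr rfl (fun i hi => if_pos (h i hi)), Finset.prod_const]
      · push_neg at h
        obtain ⟨i, hi, hne⟩ := h
        exact Finset.prod_eq_zero hi (if_neg hne)
    · rw [Finset.prod_const, Finset.card_sdiff_of_subset (Finset.mem_powerset.mp hF), Finset.card_univ]
  calc ∑ σ : Equiv.Perm α, ∏ i, ((if σ i = i then s else 0) + t)
      = ∑ F ∈ (Finset.univ : Finset α).powerset, ∑ σ : Equiv.Perm α,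
          (if ∀ i ∈ F, σ i = i then s ^ F.card else 0) * t ^ (m - F.card) := by
        rw [← Finset.sum_comm]
        exact Finset.sum_congr rfl fun σ _ => step1 σ
    _ = ∑ F ∈ (Finset.univ : Finset α).powerset,
          ((m - F.card).factorial : ℝ) * (s ^ F.card * t ^ (m - F.card)) := by
        refine Finset.sum_congr rfl fun F _ => ?_
        rw [← Finset.sum_mul]
        simp only [Finset.sum_ite_eq, Finset.sum_const, ← Finset.sum_filter]
        rw [card_fixing F, ← hm, nsmul_eq_mul]
        ring
    _ = ∑ k ∈ Finset.range (m + 1), ((m).choose k * (m - k).factorial : ℝ) *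
          (s ^ k * t ^ (m - k)) := by
        rw [Finset.powerset_card_disjiUnion]
        erw [Finset.sum_disjiUnion]
        rw [Finset.card_univ, ← hm]
        refine Finset.sum_congr rfl fun k _ => ?_
        rw [Finset.sum_congr rfl (fun F hF => by
          rw [(Finset.mem_powersetCard.mp hF).2]), Finset.sum_const,
          Finset.card_powersetCard, Finset.card_univ, ← hm, nsmul_eq_mul]
        push_cast
        ring

/-- Trace of the `ℓ`-th zeon power of `sI_n + tJ_n`:
`Σ_{|I|=ℓ} per((sI_n+tJ_n)_{II}) = (n!/(n-ℓ)!) · Σ_{k=0}^{ℓ} s^k t^(ℓ-k)/k!`. -/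
theorem stmt11 (n ℓ : ℕ) (hℓ : ℓ ≤ n) (s t : ℝ) :
    ∑ I ∈ Finset.powersetCard ℓ (Finset.univ : Finset (Fin n)),
        permOn (s • (1 : Matrix (Fin n) (Fin n) ℝ) +
          t • Matrix.of (fun _ _ => (1 : ℝ))) I I =
      (n.descFactorial ℓ : ℝ) *
        ∑ k ∈ Finset.range (ℓ + 1), s ^ k * t ^ (ℓ - k) / k.factorial := by
  have hI : ∀ I ∈ Finset.powersetCard ℓ (Finset.univ : Finset (Fin n)),
      permOn (s • (1 : Matrix (Fin n) (Fin n) ℝ) +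
        t • Matrix.of (fun _ _ => (1 : ℝ))) I I =
      ∑ k ∈ Finset.range (ℓ + 1),
        (ℓ.choose k * (ℓ - k).factorial : ℝ) * (s ^ k * t ^ (ℓ - k)) := by
    intro I hImem
    have hcard : Fintype.card {i // i ∈ I} = ℓ := by
      rw [Fintype.card_coe, (Finset.mem_powersetCard.mp hImem).2]
    have : permOn (s • (1 : Matrix (Fin n) (Fin n) ℝ) +
        t • Matrix.of (fun _ _ => (1 : ℝ))) I I =
        ∑ σ : Equiv.Perm {i // i ∈ I}, ∏ i, ((if σ i = i then s else 0) + t) := by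
      unfold permOn
      refine Finset.sum_congr rfl fun e _ => Finset.prod_congr rfl fun i _ => ?_
      simp only [Matrix.add_apply, Matrix.smul_apply, Matrix.one_apply, Matrix.of_apply,
        smul_eq_mul, mul_one, mul_ite, mul_zero]
      congr 1
      simp only [Subtype.ext_iff, eq_comm (a := ((e i : {i // i ∈ I}) : Fin n))]
    rw [this, perm_sum, hcard]
  rw [Finset.sum_congr rfl hI, Finset.sum_const, Finset.card_powersetCard, Finset.card_univ,
    Fintype.card_fin, nsmul_eq_mul, Finset.mul_sum, Finset.mul_sum]
  refine Finset.sum_congr rfl fun k hk => ?_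
  have hkℓ : k ≤ ℓ := Nat.lt_succ_iff.mp (Finset.mem_range.mp hk)
  have hnat : n.choose ℓ * (ℓ.choose k * (ℓ - k).factorial) * k.factorial =
      n.descFactorial ℓ := by
    rw [Nat.descFactorial_eq_factorial_mul_choose, ← Nat.choose_mul_factorial_mul_factorial hkℓ]
    ring
  have hcast : (n.choose ℓ : ℝ) * (ℓ.choose k * (ℓ - k).factorial) * k.factorial =
      (n.descFactorial ℓ : ℝ) := by exact_mod_cast congrArg (Nat.cast : ℕ → ℝ) hnat
  have hkf : (k.factorial : ℝ) ≠ 0 := Nat.cast_ne_zero.mpr k.factorial_ne_zero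
  field_simp
  linear_combination (s ^ k * t ^ (ℓ - k)) * hcast
end

section
/- Let R be a commutative ring and s, t ∈ R. For natural numbers n ≥ 1 and 1 ≤ ℓ ≤ n, define P_{n,ℓ}(s,t) as the permanent of the n×n matrix M_{n,ℓ} whose first n-ℓ diagonal entries equal s+t, whose remaining ℓ diagonal entries equal t, and all of whose off-diagonal entries equal t (with P_{0,0} = 1). Then P_{n,ℓ}(s,t) = P_{n,ℓ-1}(s,t) - s · P_{n-1,ℓ-1}(s,t). -/
/-- The `n×n` matrix `M_{n,ℓ}(s,t)` whose first `n-ℓ` diagonal entries are `s+t`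
and all of whose other entries are `t`: the `(i,j)`-entry is
`t + s·[i = j and i ≤ n-ℓ]` (`0`-indexed: `i < n-ℓ`). -/
def Mmat {R : Type*} [CommRing R] (n ℓ : ℕ) (s t : R) : Matrix (Fin n) (Fin n) R :=
  Matrix.of fun i j => t + if i = j ∧ (i : ℕ) < n - ℓ then s else 0

/-- `P_{n,ℓ}(s,t) = per(M_{n,ℓ}(s,t))`. -/
def P {R : Type*} [CommRing R] (n ℓ : ℕ) (s t : R) : R :=
  permanent (Mmat n ℓ s t)

/-- Summing over permutations fixing `k` is summing over permutations of the complement. -/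
lemma sum_fixpoint {R : Type*} [CommRing R] (m : ℕ) (k : Fin (m + 1))
    (f : Fin (m + 1) → Fin (m + 1) → R) :
    (∑ σ : Equiv.Perm (Fin (m + 1)),
        if σ k = k then ∏ j : Fin m, f (k.succAbove j) (σ (k.succAbove j)) else 0)
    = ∑ τ : Equiv.Perm (Fin m), ∏ j, f (k.succAbove j) (k.succAbove (τ j)) := by
  classical
  set e : Option (Fin m) × Equiv.Perm (Fin m) ≃ Equiv.Perm (Fin (m + 1)) :=
    Equiv.Perm.decomposeOption.symm.trans (finSuccEquiv' k).symm.permCongr with he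
  have happ : ∀ (o : Option (Fin m)) (τ : Equiv.Perm (Fin m)) (x : Fin (m + 1)),
      e (o, τ) x = (finSuccEquiv' k).symm
        ((Equiv.swap none o * τ.optionCongr) (finSuccEquiv' k x)) := by
    intro o τ x
    rfl
  have hk : ∀ (o : Option (Fin m)) (τ : Equiv.Perm (Fin m)),
      e (o, τ) k = (finSuccEquiv' k).symm o := by
    intro o τ
    rw [happ, finSuccEquiv'_at]
    simp
  rw [← Equiv.sum_comp e (fun σ : Equiv.Perm (Fin (m + 1)) =>
      if σ k = k then ∏ j : Fin m, f (k.succAbove j) (σ (k.succAbove j)) else 0),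
    Fintype.sum_prod_type]
  rw [Finset.sum_eq_single (none : Option (Fin m))]
  · apply Finset.sum_congr rfl
    intro τ _
    have h1 : e (none, τ) k = k := by rw [hk, finSuccEquiv'_symm_none]
    rw [if_pos h1]
    apply Finset.prod_congr rfl
    intro j _
    congr 1
    rw [happ, finSuccEquiv'_succAbove]
    simp [finSuccEquiv'_symm_some]
  · intro o _ ho
    apply Finset.sum_eq_zero
    intro τ _
    rw [if_neg]
    rw [hk]
    intro h
    apply ho
    have := congrArg (finSuccEquiv' k) h
    rw [Equiv.apply_symm_apply, finSuccEquiv'_at] at this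
    exact this
  · intro h
    exact absurd (Finset.mem_univ _) h

/-- The recurrence `P_{n,ℓ} = P_{n,ℓ-1} - s·P_{n-1,ℓ-1}` for `n ≥ 1`, `1 ≤ ℓ ≤ n`. -/
theorem stmt12 {R : Type*} [CommRing R] (s t : R) (n ℓ : ℕ)
    (hn : 1 ≤ n) (h1 : 1 ≤ ℓ) (h2 : ℓ ≤ n) :
    P n ℓ s t = P n (ℓ - 1) s t - s * P (n - 1) (ℓ - 1) s t := by
  classical
  rcases n with _ | m
  · omega
  have hsub : m + 1 - 1 = m := rfl
  set k : Fin (m + 1) := ⟨m + 1 - ℓ, by omega⟩ with hkdef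
  -- entries of the two big matrices agree off row k
  have hrow : ∀ (i : Fin (m + 1)), i ≠ k → ∀ j,
      Mmat (m + 1) (ℓ - 1) s t i j = Mmat (m + 1) ℓ s t i j := by
    intro i hi j
    have hiv : (i : ℕ) ≠ m + 1 - ℓ := fun h => hi (Fin.ext h)
    simp only [Mmat, Matrix.of_apply]
    congr 1
    have : ((i : ℕ) < m + 1 - (ℓ - 1)) ↔ ((i : ℕ) < m + 1 - ℓ) := by omega
    simp [this]
  have hprod : ∀ σ : Equiv.Perm (Fin (m + 1)),
      ∏ i, Mmat (m + 1) (ℓ - 1) s t i (σ i)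
      = ∏ i, Mmat (m + 1) ℓ s t i (σ i)
        + (if σ k = k then
            s * ∏ j : Fin m, Mmat (m + 1) ℓ s t (k.succAbove j) (σ (k.succAbove j)) else 0) := by
    intro σ
    rw [Fin.prod_univ_succAbove (fun i => Mmat (m + 1) (ℓ - 1) s t i (σ i)) k,
      Fin.prod_univ_succAbove (fun i => Mmat (m + 1) ℓ s t i (σ i)) k]
    have hQ : ∏ j : Fin m, Mmat (m + 1) (ℓ - 1) s t (k.succAbove j) (σ (k.succAbove j))
        = ∏ j : Fin m, Mmat (m + 1) ℓ s t (k.succAbove j) (σ (k.succAbove j)) :=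
      Finset.prod_congr rfl fun j _ => hrow _ (Fin.succAbove_ne k j) _
    rw [hQ]
    have hk1 : Mmat (m + 1) (ℓ - 1) s t k (σ k) = t + if σ k = k then s else 0 := by
      simp only [Mmat, Matrix.of_apply]
      congr 1
      have hlt : ((k : ℕ) < m + 1 - (ℓ - 1)) := by simp [hkdef]; omega
      by_cases h : σ k = k
      · simp [h, hlt]
      · have h' : ¬ (k = σ k) := fun hh => h hh.symm
        simp [h, h']
    have hk2 : Mmat (m + 1) ℓ s t k (σ k) = t := by
      simp only [Mmat, Matrix.of_apply]
      have : ¬ ((k : ℕ) < m + 1 - ℓ) := by simp [hkdef]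
      simp [this]
    rw [hk1, hk2]
    by_cases h : σ k = k <;> simp [h] <;> ring
  have key := sum_fixpoint m k (fun i j => Mmat (m + 1) ℓ s t i j)
  have hP : P (m + 1) (ℓ - 1) s t = P (m + 1) ℓ s t + s * P m (ℓ - 1) s t := by
    unfold P permanent
    rw [Finset.sum_congr rfl fun σ _ => hprod σ, Finset.sum_add_distrib]
    congr 1
    have hite : ∀ σ : Equiv.Perm (Fin (m + 1)),
        (if σ k = k then
            s * ∏ j : Fin m, Mmat (m + 1) ℓ s t (k.succAbove j) (σ (k.succAbove j)) else 0)
        = s * (if σ k = k then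
            ∏ j : Fin m, Mmat (m + 1) ℓ s t (k.succAbove j) (σ (k.succAbove j)) else 0) := by
      intro σ; by_cases h : σ k = k <;> simp [h]
    rw [Finset.sum_congr rfl fun σ _ => hite σ, ← Finset.mul_sum, key]
    congr 1
    apply Finset.sum_congr rfl
    intro τ _
    apply Finset.prod_congr rfl
    intro j _
    -- `Mmat (m+1) ℓ` restricted along `succAbove k` is `Mmat m (ℓ-1)`
    simp only [Mmat, Matrix.of_apply]
    congr 1
    have hinj : (k.succAbove j = k.succAbove (τ j)) ↔ (j = τ j) :=
      (Fin.succAbove_right_injective (p := k)).eq_iff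
    have hcond : ((k.succAbove j : ℕ) < m + 1 - ℓ) ↔ ((j : ℕ) < m - (ℓ - 1)) := by
      rcases lt_or_ge (Fin.castSucc j) k with h | h
      · have hj : (j : ℕ) < m + 1 - ℓ := by simpa [Fin.lt_def, hkdef] using h
        rw [Fin.succAbove_of_castSucc_lt _ _ h]
        simp only [Fin.coe_castSucc]
        omega
      · have hj : m + 1 - ℓ ≤ (j : ℕ) := by simpa [Fin.le_def, hkdef] using h
        rw [Fin.succAbove_of_le_castSucc _ _ h]
        simp only [Fin.val_succ]
        omega
    simp [hinj, hcond]
  rw [hsub, hP]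
  ring
end

section
/- Let R be a commutative ring, s, t ∈ R, and n a natural number. Then s^n = Σ_{ℓ=0}^{n} C(n,ℓ) · (-1)^ℓ · P_{n,ℓ}(s,t), where P_{n,ℓ}(s,t) is the permanent of the n×n matrix having n-ℓ diagonal entries equal to s+t and all other entries equal to t. -/
open Finset Equiv Nat

/-- Number of permutations of `Fin n` fixing each element of `T`. -/
lemma card_perm_fixing (n : ℕ) (T : Finset (Fin n)) :
    (Finset.univ.filter (fun σ : Equiv.Perm (Fin n) => ∀ i ∈ T, σ i = i)).card
      = (n - T.card)! := by
  rw [← Fintype.card_subtype]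
  have e1 : {σ : Equiv.Perm (Fin n) // ∀ i ∈ T, σ i = i}
      ≃ {f : Equiv.Perm (Fin n) // ∀ a, ¬ (a ∉ T) → f a = a} :=
    Equiv.subtypeEquivRight (by intro f; simp [not_not])
  rw [Fintype.card_congr e1, ← Fintype.card_congr (Equiv.Perm.subtypeEquivSubtypePerm
    (fun a : Fin n => a ∉ T)), Fintype.card_perm, Fintype.card_subtype]
  congr 1
  rw [Finset.filter_not, Finset.filter_mem_eq_inter, Finset.univ_inter,
    Finset.card_sdiff_of_subset (Finset.subset_univ T), Finset.card_univ, Fintype.card_fin]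

lemma card_filter_lt (n m : ℕ) (h : m ≤ n) :
    (Finset.univ.filter (fun i : Fin n => (i : ℕ) < m)).card = m := by
  rw [show (Finset.univ.filter (fun i : Fin n => (i : ℕ) < m))
      = Finset.map ⟨Fin.castLE h, Fin.castLE_injective h⟩ Finset.univ by
    ext i; simp only [Finset.mem_filter, Finset.mem_univ, true_and, Finset.mem_map]
    constructor
    · intro hi; exact ⟨⟨i, hi⟩, by simp [Fin.ext_iff]⟩
    · rintro ⟨j, hj⟩; rw [← hj]; exact j.2]
  simp

lemma prod_ite_zero'' {R : Type*} [CommMonoidWithZero R] {ι : Type*} (s : Finset ι)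
    (p : ι → Prop) [DecidablePred p] (c : R) :
    ∏ i ∈ s, (if p i then c else 0) = if ∀ i ∈ s, p i then c ^ s.card else 0 := by
  split_ifs with h
  · rw [Finset.prod_congr rfl (fun i hi => if_pos (h i hi)), Finset.prod_const]
  · push_neg at h
    obtain ⟨i, hi, hpi⟩ := h
    exact Finset.prod_eq_zero hi (if_neg hpi)

lemma trin (n ℓ k : ℕ) : n.choose ℓ * (n - ℓ).choose k = n.choose k * (n - k).choose ℓ := by
  by_cases h : ℓ + k ≤ n
  · have h1 := Nat.choose_mul (n := n) (k := ℓ + k) (s := ℓ) (Nat.le_add_right _ _)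
    have h2 := Nat.choose_mul (n := n) (k := ℓ + k) (s := k) (Nat.le_add_left _ _)
    have e1 : ℓ + k - ℓ = k := by omega
    have e2 : ℓ + k - k = ℓ := by omega
    rw [e1] at h1; rw [e2] at h2
    rw [← h1, ← h2]
    congr 1
    rw [← Nat.choose_symm (Nat.le_add_left k ℓ)]
    congr 1
    omega
  · push_neg at h
    rcases le_or_gt ℓ n with hℓ | hℓ
    · rw [Nat.choose_eq_zero_of_lt (show n - ℓ < k by omega), Nat.mul_zero]
      rcases le_or_gt k n with hk | hk
      · rw [Nat.choose_eq_zero_of_lt (show n - k < ℓ by omega), Nat.mul_zero]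
      · rw [Nat.choose_eq_zero_of_lt hk, Nat.zero_mul]
    · rw [Nat.choose_eq_zero_of_lt hℓ, Nat.zero_mul]
      rcases le_or_gt k n with hk | hk
      · rw [Nat.choose_eq_zero_of_lt (show n - k < ℓ by omega), Nat.mul_zero]
      · rw [Nat.choose_eq_zero_of_lt hk, Nat.zero_mul]

lemma alt_R {R : Type*} [CommRing R] (m : ℕ) :
    ∑ ℓ ∈ Finset.range (m + 1), (-1 : R) ^ ℓ * (m.choose ℓ : R)
      = if m = 0 then 1 else 0 := by
  have h := congrArg (fun z : ℤ => (z : R)) (Int.alternating_sum_range_choose (n := m))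
  push_cast at h
  simpa [apply_ite (fun z : ℤ => (z : R))] using h

/-- Closed form for `P`. -/
lemma P_eq {R : Type*} [CommRing R] (s t : R) (n ℓ : ℕ) :
    P n ℓ s t = ∑ k ∈ Finset.range (n + 1),
      ((n - ℓ).choose k : R) * ((n - k)! : R) * s ^ k * t ^ (n - k) := by
  classical
  set m := n - ℓ with hm
  have key : ∀ T : Finset (Fin n),
      (∑ σ : Equiv.Perm (Fin n),
        if ∀ i ∈ T, i = σ i ∧ (i : ℕ) < m then s ^ T.card else 0)
      = if ∀ i ∈ T, (i : ℕ) < m then ((n - T.card)! : R) * s ^ T.card else 0 := by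
    intro T
    by_cases hT : ∀ i ∈ T, (i : ℕ) < m
    · rw [if_pos hT]
      have hiff : ∀ σ : Equiv.Perm (Fin n),
          (∀ i ∈ T, i = σ i ∧ (i : ℕ) < m) ↔ (∀ i ∈ T, σ i = i) := by
        intro σ
        constructor
        · intro h i hi; exact (h i hi).1.symm
        · intro h i hi; exact ⟨(h i hi).symm, hT i hi⟩
      simp_rw [hiff]
      rw [← Finset.sum_filter, Finset.sum_const, card_perm_fixing n T, nsmul_eq_mul]
    · rw [if_neg hT]
      refine Finset.sum_eq_zero fun σ _ => ?_
      exact if_neg (fun h => hT fun i hi => (h i hi).2)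
  have step1 : P n ℓ s t = ∑ σ : Equiv.Perm (Fin n),
      ∑ T ∈ (Finset.univ : Finset (Fin n)).powerset,
        (if ∀ i ∈ T, i = σ i ∧ (i : ℕ) < m then s ^ T.card else 0) * t ^ (n - T.card) := by
    unfold P permanent Mmat
    refine Finset.sum_congr rfl fun σ _ => ?_
    calc ∏ i, (t + if i = σ i ∧ (i : ℕ) < m then s else 0)
        = ∏ i, ((if i = σ i ∧ (i : ℕ) < m then s else 0) + t) := by
          refine Finset.prod_congr rfl fun i _ => add_comm _ _
      _ = ∑ T ∈ (Finset.univ : Finset (Fin n)).powerset,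
            (∏ i ∈ T, if i = σ i ∧ (i : ℕ) < m then s else 0) *
              ∏ _i ∈ Finset.univ \ T, t := Finset.prod_add _ _ _
      _ = _ := by
          refine Finset.sum_congr rfl fun T hT => ?_
          rw [prod_ite_zero'', Finset.prod_const,
            Finset.card_sdiff_of_subset (Finset.mem_powerset.1 hT), Finset.card_univ, Fintype.card_fin]
          congr
  rw [step1, Finset.sum_comm]
  have step2 : ∀ T ∈ (Finset.univ : Finset (Fin n)).powerset,
      (∑ σ : Equiv.Perm (Fin n),
        (if ∀ i ∈ T, i = σ i ∧ (i : ℕ) < m then s ^ T.card else 0) * t ^ (n - T.card))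
      = (if ∀ i ∈ T, (i : ℕ) < m then
          ((n - T.card)! : R) * s ^ T.card * t ^ (n - T.card) else 0) := by
    intro T _
    rw [← Finset.sum_mul, key T]
    split_ifs <;> ring
  rw [Finset.sum_congr rfl step2]
  set F := Finset.univ.filter (fun i : Fin n => (i : ℕ) < m) with hF
  have hsplit : ∑ T ∈ (Finset.univ : Finset (Fin n)).powerset,
      (if ∀ i ∈ T, (i : ℕ) < m then ((n - T.card)! : R) * s ^ T.card * t ^ (n - T.card) else 0)
      = ∑ T ∈ F.powerset, ((n - T.card)! : R) * s ^ T.card * t ^ (n - T.card) := by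
    rw [← Finset.sum_subset (Finset.powerset_mono.2 (Finset.subset_univ F))
      (fun T _ hT' => if_neg fun hc => hT' (Finset.mem_powerset.2 fun i hi =>
        Finset.mem_filter.2 ⟨Finset.mem_univ _, hc i hi⟩))]
    exact Finset.sum_congr rfl fun T hT => if_pos
      (fun i hi => (Finset.mem_filter.1 ((Finset.mem_powerset.1 hT) hi)).2)
  rw [hsplit]
  have hcardF : F.card = m := card_filter_lt n m (by omega)
  rw [Finset.sum_powerset_apply_card
    (f := fun k => ((n - k)! : R) * s ^ k * t ^ (n - k)), hcardF]
  rw [Finset.sum_subset (Finset.range_subset_range.2 (show m + 1 ≤ n + 1 by omega))]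
  · refine Finset.sum_congr rfl fun k _ => ?_
    rw [nsmul_eq_mul]; ring
  · intro k hk hk'
    have : m < k := by
      simp only [Finset.mem_range] at hk hk'; omega
    rw [Nat.choose_eq_zero_of_lt this]
    simp

lemma myInnerSum {R : Type*} [CommRing R] (n k : ℕ) (hk : k ≤ n) :
    ∑ ℓ ∈ Finset.range (n + 1), (n.choose ℓ : R) * (-1 : R) ^ ℓ * ((n - ℓ).choose k : R)
      = if k = n then 1 else 0 := by
  calc ∑ ℓ ∈ Finset.range (n + 1), (n.choose ℓ : R) * (-1 : R) ^ ℓ * ((n - ℓ).choose k : R)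
      = ∑ ℓ ∈ Finset.range (n + 1),
          (n.choose k : R) * ((-1 : R) ^ ℓ * ((n - k).choose ℓ : R)) := by
        refine Finset.sum_congr rfl fun ℓ _ => ?_
        calc (n.choose ℓ : R) * (-1 : R) ^ ℓ * ((n - ℓ).choose k : R)
            = ((n.choose ℓ * (n - ℓ).choose k : ℕ) : R) * (-1 : R) ^ ℓ := by
              push_cast; ring
          _ = ((n.choose k * (n - k).choose ℓ : ℕ) : R) * (-1 : R) ^ ℓ := by rw [trin]
          _ = _ := by push_cast; ring
    _ = (n.choose k : R) * ∑ ℓ ∈ Finset.range (n + 1),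
          (-1 : R) ^ ℓ * ((n - k).choose ℓ : R) := by rw [Finset.mul_sum]
    _ = (n.choose k : R) * ∑ ℓ ∈ Finset.range (n - k + 1),
          (-1 : R) ^ ℓ * ((n - k).choose ℓ : R) := by
        rw [Finset.sum_subset (Finset.range_subset_range.2 (show n - k + 1 ≤ n + 1 by omega))]
        intro x hx hx'
        have : n - k < x := by
          simp only [Finset.mem_range] at hx hx'; omega
        rw [Nat.choose_eq_zero_of_lt this]
        simp
    _ = (n.choose k : R) * (if n - k = 0 then 1 else 0) := by rw [alt_R]
    _ = if k = n then 1 else 0 := by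
        by_cases h : k = n
        · subst h; simp
        · rw [if_neg (by omega), if_neg h, mul_zero]

/-- The complementary sum: `s^n = Σ_{ℓ=0}^{n} C(n,ℓ) (-1)^ℓ P_{n,ℓ}(s,t)`. -/
theorem stmt15 {R : Type*} [CommRing R] (s t : R) (n : ℕ) :
    s ^ n =
      ∑ ℓ ∈ Finset.range (n + 1),
        (n.choose ℓ : R) * (-1 : R) ^ ℓ * P n ℓ s t := by
  have h1 : ∀ ℓ ∈ Finset.range (n + 1),
      (n.choose ℓ : R) * (-1 : R) ^ ℓ * P n ℓ s t
      = ∑ k ∈ Finset.range (n + 1),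
          (n.choose ℓ : R) * (-1 : R) ^ ℓ * ((n - ℓ).choose k : R)
            * (((n - k)! : R) * s ^ k * t ^ (n - k)) := by
    intro ℓ _
    rw [P_eq, Finset.mul_sum]
    refine Finset.sum_congr rfl fun k _ => ?_
    ring
  rw [Finset.sum_congr rfl h1, Finset.sum_comm]
  have h2 : ∀ k ∈ Finset.range (n + 1),
      (∑ ℓ ∈ Finset.range (n + 1),
        (n.choose ℓ : R) * (-1 : R) ^ ℓ * ((n - ℓ).choose k : R)
          * (((n - k)! : R) * s ^ k * t ^ (n - k)))
      = (if k = n then 1 else 0) * (((n - k)! : R) * s ^ k * t ^ (n - k)) := by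
    intro k hk
    rw [← Finset.sum_mul, myInnerSum n k (by simp only [Finset.mem_range] at hk; omega)]
  rw [Finset.sum_congr rfl h2, Finset.sum_eq_single n]
  · simp
  · intro b _ hb
    rw [if_neg hb, zero_mul]
  · intro h
    exact absurd (Finset.self_mem_range_succ n) h
end

section
/- Fix real numbers s, t, x with t ≠ 0 and x ≠ -1, and for each n let Q_n(x) = Σ_{ℓ=0}^{n} C(n,ℓ) x^ℓ P_{n,ℓ}(s,t), where P_{n,ℓ}(s,t) is the permanent of the n×n matrix having n-ℓ diagonal entries equal to s+t and all other entries equal to t. Then Q_n(x) / (t^n (1+x)^n · n!) tends to e^{s/(t(1+x))} as n → ∞. -/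
namespace Stmt17Aux

open Finset

lemma card_fixing (n : ℕ) (S : Finset (Fin n)) :
    (univ.filter (fun σ : Equiv.Perm (Fin n) => ∀ i ∈ S, σ i = i)).card
      = (n - S.card).factorial := by
  rw [← Fintype.card_subtype]
  have e1 : {σ : Equiv.Perm (Fin n) // ∀ i ∈ S, σ i = i}
      ≃ {f : Equiv.Perm (Fin n) // ∀ a, ¬(a ∉ S) → f a = a} :=
    Equiv.subtypeEquivRight (by intro f; simp [not_not])
  have e2 := (Equiv.Perm.subtypeEquivSubtypePerm (fun a : Fin n => a ∉ S))
  rw [Fintype.card_congr (e1.trans e2.symm), Fintype.card_perm,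
    Fintype.card_subtype_compl, Fintype.card_coe, Fintype.card_fin]

lemma card_small (n m : ℕ) (h : m ≤ n) :
    (univ.filter (fun i : Fin n => (i : ℕ) < m)).card = m := by
  rw [← Finset.card_image_of_injective _ Fin.val_injective]
  have : Finset.image Fin.val (univ.filter (fun i : Fin n => (i : ℕ) < m))
      = Finset.range m := by
    ext a
    simp only [mem_image, mem_filter, mem_univ, true_and, Finset.mem_range]
    constructor
    · rintro ⟨i, hi, rfl⟩; exact hi
    · intro ha; exact ⟨⟨a, lt_of_lt_of_le ha h⟩, ha, rfl⟩
  rw [this, Finset.card_range]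

lemma prod_ite_zero' {R : Type*} [CommRing R] {ι : Type*} (S : Finset ι) (p : ι → Prop)
    [DecidablePred p] (s : R) :
    ∏ i ∈ S, (if p i then s else 0) = if ∀ i ∈ S, p i then s ^ S.card else 0 := by
  by_cases h : ∀ i ∈ S, p i
  · rw [if_pos h, ← Finset.prod_const]
    exact Finset.prod_congr rfl fun i hi => if_pos (h i hi)
  · rw [if_neg h]
    push_neg at h
    obtain ⟨i, hi, hp⟩ := h
    exact Finset.prod_eq_zero hi (if_neg hp)

lemma P_eq {R : Type*} [CommRing R] (n ℓ : ℕ) (s t : R) :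
    P n ℓ s t = ∑ k ∈ Finset.range (n - ℓ + 1),
      (((n - ℓ).choose k * (n - k).factorial : ℕ) : R) * (s ^ k * t ^ (n - k)) := by
  set m := n - ℓ with hm
  have hmn : m ≤ n := Nat.sub_le n ℓ
  have h1 : ∀ σ : Equiv.Perm (Fin n),
      (∏ i, (t + if i = σ i ∧ (i : ℕ) < m then s else 0))
      = ∑ S ∈ (univ : Finset (Fin n)).powerset,
          (if ∀ i ∈ S, i = σ i ∧ (i : ℕ) < m then s ^ S.card else 0) * t ^ (n - S.card) := by
    intro σ
    simp_rw [add_comm t]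
    rw [Finset.prod_add]
    refine Finset.sum_congr rfl fun S hS => ?_
    rw [prod_ite_zero', Finset.prod_const, Finset.card_sdiff_of_subset (Finset.mem_powerset.mp hS),
      Finset.card_univ, Fintype.card_fin]
    congr 1
    convert rfl using 2
  have h2 : ∀ S : Finset (Fin n),
      (∑ σ : Equiv.Perm (Fin n),
        (if ∀ i ∈ S, i = σ i ∧ (i : ℕ) < m then s ^ S.card else 0) * t ^ (n - S.card))
      = (if ∀ i ∈ S, (i : ℕ) < m
          then (((n - S.card).factorial : ℕ) : R) * (s ^ S.card * t ^ (n - S.card)) else 0) := by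
    intro S
    by_cases hs : ∀ i ∈ S, (i : ℕ) < m
    · rw [if_pos hs]
      have hc : ∀ σ : Equiv.Perm (Fin n),
          (∀ i ∈ S, i = σ i ∧ (i : ℕ) < m) ↔ (∀ i ∈ S, σ i = i) :=
        fun σ => ⟨fun h i hi => ((h i hi).1).symm, fun h i hi => ⟨(h i hi).symm, hs i hi⟩⟩
      simp_rw [ite_mul, zero_mul]
      calc (∑ σ : Equiv.Perm (Fin n),
              if ∀ i ∈ S, i = σ i ∧ (i : ℕ) < m then s ^ S.card * t ^ (n - S.card) else 0)
          = ∑ σ : Equiv.Perm (Fin n),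
              (if ∀ i ∈ S, σ i = i then s ^ S.card * t ^ (n - S.card) else 0) := by
            refine Finset.sum_congr rfl fun σ _ => ?_
            simp_rw [hc σ]
        _ = (((n - S.card).factorial : ℕ) : R) * (s ^ S.card * t ^ (n - S.card)) := by
            rw [Finset.sum_ite, Finset.sum_const_zero, add_zero, Finset.sum_const,
              card_fixing, nsmul_eq_mul]
    · rw [if_neg hs]
      refine Finset.sum_eq_zero fun σ _ => ?_
      have : ¬ (∀ i ∈ S, i = σ i ∧ (i : ℕ) < m) := by
        intro h; exact hs fun i hi => (h i hi).2
      rw [if_neg this, zero_mul]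
  have key : P n ℓ s t
      = ∑ S ∈ (univ : Finset (Fin n)).powerset,
          (if ∀ i ∈ S, (i : ℕ) < m
            then (((n - S.card).factorial : ℕ) : R) * (s ^ S.card * t ^ (n - S.card)) else 0) := by
    rw [P, permanent]
    simp_rw [Mmat, Matrix.of_apply]
    rw [Finset.sum_congr rfl fun σ _ => h1 σ, Finset.sum_comm]
    exact Finset.sum_congr rfl fun S _ => h2 S
  rw [key]
  set small := (univ.filter (fun i : Fin n => (i : ℕ) < m)) with hsmall
  have hcond : ∀ S : Finset (Fin n), (∀ i ∈ S, (i : ℕ) < m) ↔ S ∈ small.powerset := by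
    intro S
    rw [Finset.mem_powerset]
    constructor
    · intro h i hi; exact Finset.mem_filter.mpr ⟨Finset.mem_univ i, h i hi⟩
    · intro h i hi; exact (Finset.mem_filter.mp (h hi)).2
  calc (∑ S ∈ (univ : Finset (Fin n)).powerset,
          (if ∀ i ∈ S, (i : ℕ) < m
            then (((n - S.card).factorial : ℕ) : R) * (s ^ S.card * t ^ (n - S.card)) else 0))
      = ∑ S ∈ small.powerset,
          (((n - S.card).factorial : ℕ) : R) * (s ^ S.card * t ^ (n - S.card)) := by
        rw [Finset.sum_congr rfl (fun S _ => if_congr (hcond S) rfl rfl)]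
        rw [Finset.sum_ite_mem, Finset.inter_eq_right.mpr
          (Finset.powerset_mono.mpr (Finset.subset_univ small))]
    _ = ∑ k ∈ Finset.range (m + 1),
          ((m.choose k * (n - k).factorial : ℕ) : R) * (s ^ k * t ^ (n - k)) := by
        rw [← card_small n m hmn, ← hsmall]
        rw [Finset.powerset_card_disjiUnion, Finset.sum_disjiUnion (h := (Finset.pairwise_disjoint_powersetCard small).set_pairwise _)]
        refine Finset.sum_congr rfl fun j hj => ?_
        have : ∀ S ∈ Finset.powersetCard j small,
            (((n - S.card).factorial : ℕ) : R) * (s ^ S.card * t ^ (n - S.card))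
            = (((n - j).factorial : ℕ) : R) * (s ^ j * t ^ (n - j)) := by
          intro S hS
          rw [(Finset.mem_powersetCard.mp hS).2]
        rw [Finset.sum_congr rfl this, Finset.sum_const, Finset.card_powersetCard,
          nsmul_eq_mul]
        push_cast
        ring

lemma choose_swap (n ℓ k : ℕ) :
    n.choose ℓ * (n - ℓ).choose k = n.choose k * (n - k).choose ℓ := by
  rcases le_or_gt (ℓ + k) n with h | h
  · have h1 := Nat.choose_mul (n := n) (Nat.le_add_left k ℓ)
    have h2 := Nat.choose_mul (n := n) (Nat.le_add_right ℓ k)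
    rw [Nat.add_sub_cancel] at h1
    rw [Nat.add_sub_cancel_left] at h2
    have h3 : (ℓ + k).choose ℓ = (ℓ + k).choose k := Nat.choose_symm_add
    rw [← h2, h3, h1]
  · have z1 : n.choose ℓ * (n - ℓ).choose k = 0 := by
      rcases le_or_gt ℓ n with hl | hl
      · rw [Nat.choose_eq_zero_of_lt (show n - ℓ < k by omega), mul_zero]
      · rw [Nat.choose_eq_zero_of_lt hl, zero_mul]
    have z2 : n.choose k * (n - k).choose ℓ = 0 := by
      rcases le_or_gt k n with hk | hk
      · rw [Nat.choose_eq_zero_of_lt (show n - k < ℓ by omega), mul_zero]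
      · rw [Nat.choose_eq_zero_of_lt hk, zero_mul]
    rw [z1, z2]

lemma binom_sum (x : ℝ) (N n : ℕ) (h : N ≤ n) :
    ∑ ℓ ∈ range (n + 1), (N.choose ℓ : ℝ) * x ^ ℓ = (1 + x) ^ N := by
  have h1 : (1 + x) ^ N = ∑ ℓ ∈ range (N + 1), (N.choose ℓ : ℝ) * x ^ ℓ := by
    rw [add_comm 1 x, add_pow]
    exact Finset.sum_congr rfl fun ℓ _ => by rw [one_pow, mul_one, mul_comm]
  rw [h1]
  exact (Finset.sum_subset (Finset.range_subset_range.mpr (by omega)) (fun k _ hk => by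
    rw [Nat.choose_eq_zero_of_lt (by simp only [Finset.mem_range] at hk ⊢; omega),
      Nat.cast_zero, zero_mul])).symm

lemma Q_eq (n : ℕ) (s t x : ℝ) :
    (∑ ℓ ∈ Finset.range (n + 1), (n.choose ℓ : ℝ) * x ^ ℓ * P n ℓ s t)
    = ∑ k ∈ Finset.range (n + 1),
        (n.choose k : ℝ) * (n - k).factorial * s ^ k * (t ^ (n - k) * (1 + x) ^ (n - k)) := by
  have step1 : ∀ ℓ ∈ Finset.range (n + 1),
      (n.choose ℓ : ℝ) * x ^ ℓ * P n ℓ s t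
      = ∑ k ∈ Finset.range (n + 1), (n.choose ℓ : ℝ) * x ^ ℓ *
          ((((n - ℓ).choose k * (n - k).factorial : ℕ) : ℝ) * (s ^ k * t ^ (n - k))) := by
    intro ℓ hℓ
    rw [P_eq, Finset.mul_sum]
    exact Finset.sum_subset (Finset.range_subset_range.mpr (by omega)) (fun k _ hk => by
      rw [Nat.choose_eq_zero_of_lt
          (show n - ℓ < k by simp only [Finset.mem_range] at hk; omega),
        Nat.zero_mul, Nat.cast_zero, zero_mul, mul_zero])
  rw [Finset.sum_congr rfl step1, Finset.sum_comm]
  refine Finset.sum_congr rfl fun k hk => ?_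
  have hk' : k ≤ n := Nat.lt_succ_iff.mp (Finset.mem_range.mp hk)
  have inner : ∀ ℓ ∈ Finset.range (n + 1),
      (n.choose ℓ : ℝ) * x ^ ℓ *
          ((((n - ℓ).choose k * (n - k).factorial : ℕ) : ℝ) * (s ^ k * t ^ (n - k)))
      = (n.choose k : ℝ) * (n - k).factorial * s ^ k * t ^ (n - k) *
          (((n - k).choose ℓ : ℝ) * x ^ ℓ) := by
    intro ℓ _
    have hs := congrArg (Nat.cast : ℕ → ℝ) (choose_swap n ℓ k)
    push_cast at hs ⊢
    linear_combination (x ^ ℓ * ((n - k).factorial : ℝ) * s ^ k * t ^ (n - k)) * hs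
  rw [Finset.sum_congr rfl inner, ← Finset.mul_sum, binom_sum x (n - k) n (Nat.sub_le n k)]
  ring

end Stmt17Aux

open Stmt17Aux in
/-- Asymptotics of the associated polynomials: for `t ≠ 0`, `x ≠ -1`,
`Q_n(x) / (t^n (1+x)^n n!) → e^{s/(t(1+x))}` as `n → ∞`. -/
theorem stmt17 (s t x : ℝ) (ht : t ≠ 0) (hx : x ≠ -1) :
    Filter.Tendsto
      (fun n : ℕ =>
        (∑ ℓ ∈ Finset.range (n + 1), (n.choose ℓ : ℝ) * x ^ ℓ * P n ℓ s t) /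
          (t ^ n * (1 + x) ^ n * n.factorial))
      Filter.atTop (nhds (Real.exp (s / (t * (1 + x))))) := by
  have hu : (1 : ℝ) + x ≠ 0 := fun h => hx (by linarith)
  set y : ℝ := s / (t * (1 + x)) with hy
  have hfun : ∀ n : ℕ,
      (∑ ℓ ∈ Finset.range (n + 1), (n.choose ℓ : ℝ) * x ^ ℓ * P n ℓ s t) /
          (t ^ n * (1 + x) ^ n * n.factorial)
      = ∑ k ∈ Finset.range (n + 1), y ^ k / k.factorial := by
    intro n
    rw [Q_eq, Finset.sum_div]
    refine Finset.sum_congr rfl fun k hk => ?_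
    have hk' : k ≤ n := Nat.lt_succ_iff.mp (Finset.mem_range.mp hk)
    have hfact := congrArg (Nat.cast : ℕ → ℝ) (Nat.choose_mul_factorial_mul_factorial hk')
    push_cast at hfact
    have hden : t ^ n * (1 + x) ^ n * (n.factorial : ℝ) ≠ 0 :=
      mul_ne_zero (mul_ne_zero (pow_ne_zero n ht) (pow_ne_zero n hu))
        (Nat.cast_ne_zero.mpr n.factorial_ne_zero)
    rw [div_eq_div_iff hden (Nat.cast_ne_zero.mpr k.factorial_ne_zero)]
    rw [pow_sub₀ t ht hk', pow_sub₀ (1 + x) hu hk', hy, div_pow, mul_pow]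
    field_simp
    linear_combination s ^ k * hfact
  rw [funext hfun]
  have h := (NormedSpace.expSeries_div_hasSum_exp y).tendsto_sum_nat
  have h2 := h.comp (Filter.tendsto_add_atTop_nat 1)
  rw [Real.exp_eq_exp_ℝ]
  exact h2
end

section
/- Let 0 ≤ ℓ ≤ n be natural numbers. The number of permutations σ of {1,…,n} such that σ(i) ≠ i for every i with 1 ≤ i ≤ n-ℓ equals Σ_{j=0}^{ℓ} C(ℓ, j) · d_{n-j}, where d_m denotes the number of derangements of an m-element set (permutations with no fixed points). -/
open Equiv Finset

private lemma stmt19_fiber_card (α : Type*) [Fintype α] [DecidableEq α] (F : Finset α) :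
    (Finset.univ.filter (fun σ : Perm α => ∀ a, a ∈ F ↔ σ a = a)).card
      = numDerangements (Fintype.card α - F.card) := by
  classical
  have e : {σ : Perm α // ∀ a, a ∈ F ↔ σ a = a} ≃ derangements {x : α // x ∉ F} :=
    ((derangements.subtypeEquiv (fun x : α => x ∉ F)).trans
      (Equiv.subtypeEquivRight (fun f => by
        simp [Function.mem_fixedPoints, Function.IsFixedPt, not_not, Iff.comm]))).symm
  have h1 : (Finset.univ.filter (fun σ : Perm α => ∀ a, a ∈ F ↔ σ a = a)).card
      = Nat.card {σ : Perm α // ∀ a, a ∈ F ↔ σ a = a} := by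
    rw [Nat.card_eq_fintype_card, Fintype.card_subtype]
  rw [h1, Nat.card_congr e, Nat.card_eq_fintype_card,
    card_derangements_eq_numDerangements]
  congr 1
  rw [Fintype.card_subtype_compl, Fintype.card_coe]

private lemma stmt19_count (α : Type*) [Fintype α] [DecidableEq α] (S : Finset α) :
    Nat.card {σ : Perm α // ∀ a ∈ S, σ a ≠ a}
      = ∑ F ∈ Sᶜ.powerset, numDerangements (Fintype.card α - F.card) := by
  classical
  rw [Nat.card_eq_fintype_card, Fintype.card_subtype]
  rw [Finset.card_eq_sum_card_fiberwise
    (f := fun σ : Perm α => Finset.univ.filter (fun x => σ x = x)) (t := Sᶜ.powerset)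
    (by
      intro σ hσ
      simp only [mem_coe, mem_filter, mem_univ, true_and] at hσ
      simp only [mem_coe, mem_powerset]
      intro x hx
      simp only [mem_filter, mem_univ, true_and] at hx
      simp only [mem_compl]
      intro hxS
      exact hσ x hxS hx)]
  refine Finset.sum_congr rfl fun F hF => ?_
  rw [mem_powerset] at hF
  rw [← stmt19_fiber_card α F]
  congr 1
  ext σ
  simp only [mem_filter, mem_univ, true_and]
  constructor
  · rintro ⟨hcond, rfl⟩ a
    simp
  · intro hiff
    refine ⟨fun a haS ha => ?_, ?_⟩
    · have : a ∈ F := (hiff a).2 ha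
      have := hF this
      simp only [mem_compl] at this
      exact this haS
    · ext a
      simp [← hiff a]

/-- The number of permutations of `{1,…,n}` deranging the first `n-ℓ` points equals
`Σ_{j=0}^{ℓ} C(ℓ,j) · d_{n-j}`, where `d_m` is the number of derangements of an
`m`-element set. -/
theorem stmt19 (n ℓ : ℕ) (h : ℓ ≤ n) :
    Nat.card {σ : Equiv.Perm (Fin n) // ∀ i : Fin n, (i : ℕ) < n - ℓ → σ i ≠ i} =
      ∑ j ∈ Finset.range (ℓ + 1), ℓ.choose j * numDerangements (n - j) := by
  classical
  have hS : Nat.card {σ : Equiv.Perm (Fin n) // ∀ i : Fin n, (i : ℕ) < n - ℓ → σ i ≠ i}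
      = Nat.card {σ : Perm (Fin n) //
          ∀ a ∈ Finset.univ.filter (fun i : Fin n => (i : ℕ) < n - ℓ), σ a ≠ a} := by
    apply Nat.card_congr
    exact Equiv.subtypeEquivRight (fun σ => by simp)
  rw [hS, stmt19_count]
  set T := (Finset.univ.filter (fun i : Fin n => (i : ℕ) < n - ℓ))ᶜ with hT
  have hcardT : T.card = ℓ := by
    rw [hT, card_compl]
    have : (Finset.univ.filter (fun i : Fin n => (i : ℕ) < n - ℓ))
        = (Finset.range (n - ℓ)).attachFin
            (fun i hi => lt_of_lt_of_le (Finset.mem_range.mp hi) (Nat.sub_le n ℓ)) := by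
      ext i
      simp [Finset.mem_attachFin]
    rw [this, Finset.card_attachFin, Finset.card_range, Fintype.card_fin]
    omega
  rw [Finset.sum_powerset, hcardT]
  refine Finset.sum_congr rfl fun j hj => ?_
  calc ∑ F ∈ Finset.powersetCard j T, numDerangements (Fintype.card (Fin n) - F.card)
      = ∑ _F ∈ Finset.powersetCard j T, numDerangements (n - j) :=
        Finset.sum_congr rfl fun F hF => by
          rw [(Finset.mem_powersetCard.mp hF).2, Fintype.card_fin]
    _ = ℓ.choose j * numDerangements (n - j) := by
        rw [Finset.sum_const, Finset.card_powersetCard, hcardT, smul_eq_mul]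
end
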